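/- arXiv:2506.18578 — 7 statements merged into one kernel-verified Lean document; each statement's English description precedes it below -/
import Mathlib

section
/- For every binary matrix M and every linear branching B of the containment digraph D_M, the number of B-uncovered pairs equals the sum of the cardinalities of the maximal elements of B, i.e., |U(B)| = Σ_{v ∈ max B} |v|, where max B is the set of vertices with out-degree zero in B. -/
open Classical Finset

/-- The family of support sets of the columns of a binary matrix `M`:
the vertex set of the containment digraph `D_M`. -/
def suppFamily {m n : ℕ} (M : Matrix (Fin m) (Fin n) Bool) :
    Finset (Finset (Fin m)) :=
  Finset.univ.image fun j => Finset.univ.filter fun i => M i j = true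

/-- `B` is a branching of the containment digraph on the family `V`:
its arcs are proper inclusions between members of `V` and every vertex is
the tail of at most one arc. -/
def IsBranching {ρ : Type*} [DecidableEq ρ] (V : Finset (Finset ρ))
    (B : Finset (Finset ρ × Finset ρ)) : Prop :=
  (∀ p ∈ B, p.1 ∈ V ∧ p.2 ∈ V ∧ p.1 ⊂ p.2) ∧
  ∀ p ∈ B, ∀ q ∈ B, p.1 = q.1 → p.2 = q.2

/-- A branching is linear if every vertex is the head of at most one arc. -/
def IsLinear {ρ : Type*} [DecidableEq ρ]
    (B : Finset (Finset ρ × Finset ρ)) : Prop :=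
  ∀ p ∈ B, ∀ q ∈ B, p.2 = q.2 → p.1 = q.1

/-- `nuB B v` = number of rows of `v` uncovered in `v` with respect to `B`,
i.e. `|v \ ⋃_{u ∈ N_B^-(v)} u|`. -/
def nuB {ρ : Type*} [DecidableEq ρ] (B : Finset (Finset ρ × Finset ρ))
    (v : Finset ρ) : ℕ :=
  (v \ (B.filter fun p => p.2 = v).sup fun p => p.1).card

/-- The total number of `B`-uncovered pairs. -/
def uncov {ρ : Type*} [DecidableEq ρ] (V : Finset (Finset ρ))
    (B : Finset (Finset ρ × Finset ρ)) : ℕ :=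
  ∑ v ∈ V, nuB B v

/-- The uncovering number: minimum number of uncovered pairs over all
branchings. -/
noncomputable def beta {ρ : Type*} [DecidableEq ρ]
    (V : Finset (Finset ρ)) : ℕ :=
  sInf {k | ∃ B, IsBranching V B ∧ uncov V B = k}

/-- The linear uncovering number: minimum number of uncovered pairs over all
linear branchings. -/
noncomputable def betaL {ρ : Type*} [DecidableEq ρ]
    (V : Finset (Finset ρ)) : ℕ :=
  sInf {k | ∃ B, IsBranching V B ∧ IsLinear B ∧ uncov V B = k}

/-- A set of members of a family of sets is an antichain if its elements are
pairwise incomparable under inclusion. -/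
def IsAntichainFam {ρ : Type*} (X : Finset (Finset ρ)) : Prop :=
  ∀ u ∈ X, ∀ v ∈ X, u ≠ v → ¬ u ⊆ v ∧ ¬ v ⊆ u

/-- The width of (the containment digraph on) a family of finite sets. -/
noncomputable def widthFam {ρ : Type*} [DecidableEq ρ]
    (V : Finset (Finset ρ)) : ℕ :=
  (V.powerset.filter IsAntichainFam).sup Finset.card

/-- The maximum total cardinality of an antichain. -/
noncomputable def alphaW {ρ : Type*} [DecidableEq ρ]
    (V : Finset (Finset ρ)) : ℕ :=
  (V.powerset.filter IsAntichainFam).sup fun S => ∑ v ∈ S, v.card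

/-- For every binary matrix `M` and every linear branching `B` of `D_M`,
the number of `B`-uncovered pairs equals `Σ_{v ∈ max B} |v|`, where `max B`
is the set of vertices of out-degree zero in `B`. -/
theorem stmt4 {m n : ℕ} (M : Matrix (Fin m) (Fin n) Bool)
    (B : Finset (Finset (Fin m) × Finset (Fin m)))
    (hB : IsBranching (suppFamily M) B) (hlin : IsLinear B) :
    uncov (suppFamily M) B =
      ∑ v ∈ (suppFamily M).filter (fun v => ∀ p ∈ B, p.1 ≠ v), v.card := by

  classical
  set V := suppFamily M with hV
  obtain ⟨harc, htail⟩ := hB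
  set f : Finset (Fin m) → Finset (Fin m) :=
    fun v => (B.filter fun p => p.2 = v).sup fun p => p.1 with hf
  have hfsub : ∀ v ∈ V, f v ⊆ v := by
    intro v hv
    rw [← Finset.le_iff_subset]
    apply Finset.sup_le
    intro p hp
    rw [Finset.mem_filter] at hp
    exact hp.2 ▸ (harc p hp.1).2.2.subset
  have hinj2 : ∀ p ∈ B, ∀ q ∈ B, p.2 = q.2 → p = q := fun p hp q hq h =>
    Prod.ext (hlin p hp q hq h) h
  have hinj1 : ∀ p ∈ B, ∀ q ∈ B, p.1 = q.1 → p = q := fun p hp q hq h =>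
    Prod.ext h (htail p hp q hq h)
  have hfB : ∀ p ∈ B, f p.2 = p.1 := by
    intro p hp
    have hfilt : B.filter (fun q => q.2 = p.2) = {p} := by
      ext q
      simp only [Finset.mem_filter, Finset.mem_singleton]
      constructor
      · rintro ⟨hq, h⟩; exact hinj2 q hq p hp h
      · rintro rfl; exact ⟨hp, rfl⟩
    rw [hf]; simp [hfilt]
  have hheads : (B.image Prod.snd) ⊆ V := by
    intro v hv
    rw [Finset.mem_image] at hv
    obtain ⟨p, hp, rfl⟩ := hv
    exact (harc p hp).2.1
  have htails : (B.image Prod.fst) ⊆ V := by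
    intro v hv
    rw [Finset.mem_image] at hv
    obtain ⟨p, hp, rfl⟩ := hv
    exact (harc p hp).1
  have hsumf : ∑ v ∈ V, (f v).card = ∑ p ∈ B, p.1.card := by
    rw [← Finset.sum_subset hheads]
    · rw [Finset.sum_image hinj2]
      exact Finset.sum_congr rfl fun p hp => by rw [hfB p hp]
    · intro v hv hv'
      have hfilt : B.filter (fun p => p.2 = v) = ∅ := by
        rw [Finset.filter_eq_empty_iff]
        intro p hp h
        exact hv' (Finset.mem_image.mpr ⟨p, hp, h⟩)
      rw [hf]; simp [hfilt]
  have h1 : uncov V B + ∑ p ∈ B, p.1.card = ∑ v ∈ V, v.card := by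
    rw [← hsumf, uncov, ← Finset.sum_add_distrib]
    refine Finset.sum_congr rfl fun v hv => ?_
    rw [nuB]
    exact Finset.card_sdiff_add_card_eq_card (hfsub v hv)
  have hsumt : ∑ v ∈ V.filter (fun v => ¬ ∀ p ∈ B, p.1 ≠ v), v.card
      = ∑ p ∈ B, p.1.card := by
    have heq : V.filter (fun v => ¬ ∀ p ∈ B, p.1 ≠ v) = B.image Prod.fst := by
      ext v
      simp only [Finset.mem_filter, Finset.mem_image]
      push_neg
      constructor
      · rintro ⟨_, p, hp, rfl⟩; exact ⟨p, hp, rfl⟩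
      · rintro ⟨p, hp, rfl⟩
        exact ⟨htails (Finset.mem_image.mpr ⟨p, hp, rfl⟩), p, hp, rfl⟩
    rw [heq, Finset.sum_image hinj1]
  have h2 : (∑ v ∈ V.filter (fun v => ∀ p ∈ B, p.1 ≠ v), v.card)
      + ∑ p ∈ B, p.1.card = ∑ v ∈ V, v.card := by
    rw [← hsumt, Finset.sum_filter_add_sum_filter_not]
  omega
end

section
/- For every binary matrix M and every row r, the chromatic number of the conflict graph G_{M,r} equals the width of the principal subgraph D_{M,r} of the containment digraph corresponding to r. -/
open Classical Finset

/-- Two columns `i`, `j` of the binary matrix `M` are in conflict if there are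
rows whose entries restricted to `(i,j)` are `(1,1)`, `(1,0)` and `(0,1)`. -/
def InConflict {m n : ℕ} (M : Matrix (Fin m) (Fin n) Bool) (i j : Fin n) :
    Prop :=
  (∃ p, M p i = true ∧ M p j = true) ∧
  (∃ q, M q i = true ∧ M q j = false) ∧
  (∃ s, M s i = false ∧ M s j = true)

/-- The conflict graph `G_{M,r}`: vertices are the columns with a `1` in
row `r`, two of them adjacent iff the corresponding columns are in conflict. -/
noncomputable def conflictGraph {m n : ℕ} (M : Matrix (Fin m) (Fin n) Bool)
    (r : Fin m) : SimpleGraph {j : Fin n // M r j = true} :=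
  SimpleGraph.fromRel fun i j => InConflict M i.1 j.1

section DilworthAux

variable {ρ : Type*} [DecidableEq ρ]

lemma antichainFam_empty : IsAntichainFam (∅ : Finset (Finset ρ)) := by
  intro u hu; simp at hu

lemma antichainFam_subset {A B : Finset (Finset ρ)} (h : IsAntichainFam B) (hAB : A ⊆ B) :
    IsAntichainFam A := fun u hu v hv huv => h u (hAB hu) v (hAB hv) huv

lemma card_le_width {V A : Finset (Finset ρ)} (hA : A ⊆ V) (hAC : IsAntichainFam A) :
    A.card ≤ widthFam V :=
  Finset.le_sup (by simp only [Finset.mem_filter, Finset.mem_powerset]; exact ⟨hA, hAC⟩)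

lemma width_exists (V : Finset (Finset ρ)) :
    ∃ A, A ⊆ V ∧ IsAntichainFam A ∧ A.card = widthFam V := by
  have hne : (V.powerset.filter IsAntichainFam).Nonempty := by
    refine ⟨∅, ?_⟩
    simp only [Finset.mem_filter, Finset.mem_powerset]
    exact ⟨Finset.empty_subset _, antichainFam_empty⟩
  obtain ⟨A, hA, hcard⟩ := Finset.exists_mem_eq_sup _ hne Finset.card
  rw [Finset.mem_filter, Finset.mem_powerset] at hA
  exact ⟨A, hA.1, hA.2, hcard.symm⟩

lemma chain_meet {V A : Finset (Finset ρ)} {f : Finset ρ → ℕ} {k : ℕ}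
    (hf1 : ∀ v ∈ V, f v < k)
    (hf2 : ∀ u ∈ V, ∀ v ∈ V, f u = f v → u ⊆ v ∨ v ⊆ u)
    (hAV : A ⊆ V) (hAC : IsAntichainFam A) (hcard : A.card = k)
    {i : ℕ} (hi : i < k) : ∃ v ∈ A, f v = i := by
  have hinj : Set.InjOn f A := by
    intro u hu v hv huv
    by_contra hne
    rcases hf2 u (hAV hu) v (hAV hv) huv with h | h
    · exact (hAC u hu v hv hne).1 h
    · exact (hAC u hu v hv hne).2 h
  have himg : A.image f = Finset.range k := by
    apply Finset.eq_of_subset_of_card_le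
    · intro x hx
      rw [Finset.mem_image] at hx
      obtain ⟨v, hv, rfl⟩ := hx
      exact Finset.mem_range.2 (hf1 v (hAV hv))
    · rw [Finset.card_range, Finset.card_image_of_injOn hinj, hcard]
  have : i ∈ A.image f := himg ▸ Finset.mem_range.2 hi
  simpa using this

theorem dilworthFam (V : Finset (Finset ρ)) :
    ∃ f : Finset ρ → ℕ, (∀ v ∈ V, f v < widthFam V) ∧
      ∀ u ∈ V, ∀ v ∈ V, f u = f v → u ⊆ v ∨ v ⊆ u := by
  induction V using Finset.strongInduction with
  | _ V ih =>
  rcases V.eq_empty_or_nonempty with rfl | hV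
  · exact ⟨fun _ => 0, by simp, by simp⟩
  obtain ⟨a, haV, hamax⟩ := V.exists_maximal hV
  obtain ⟨f', hf1, hf2⟩ := ih (V.erase a) (Finset.erase_ssubset haV)
  set k := widthFam (V.erase a) with hk
  have hmono : k ≤ widthFam V := by
    obtain ⟨A, hA, hAC, hcard⟩ := width_exists (V.erase a)
    rw [hk, ← hcard]
    exact card_le_width (hA.trans (Finset.erase_subset _ _)) hAC
  by_cases hw : widthFam V = k
  · -- hard case: width did not grow
    have hone : 1 ≤ widthFam V := by
      have h1 : ({a} : Finset (Finset ρ)).card ≤ widthFam V :=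
        card_le_width (Finset.singleton_subset_iff.2 haV)
          (by intro u hu v hv huv; simp at hu hv; subst hu; subst hv; exact absurd rfl huv)
      simpa using h1
    have hk1 : 1 ≤ k := hw ▸ hone
    -- chains and their maximal elements appearing in maximum antichains
    set T : ℕ → Finset (Finset ρ) := fun i =>
      (V.erase a).filter fun x => f' x = i ∧
        ∃ A, A ⊆ V.erase a ∧ IsAntichainFam A ∧ A.card = k ∧ x ∈ A with hT
    have hTne : ∀ i, i < k → ∃ x ∈ T i, ∀ y ∈ T i, ¬ x ⊂ y := by
      intro i hi
      have hne : (T i).Nonempty := by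
        obtain ⟨A, hA, hAC, hcard⟩ := width_exists (V.erase a)
        obtain ⟨v, hv, hfv⟩ := chain_meet hf1 hf2 hA hAC hcard hi
        exact ⟨v, Finset.mem_filter.2 ⟨hA hv, hfv, A, hA, hAC, hcard, hv⟩⟩
      obtain ⟨x, hx, hmax⟩ := (T i).exists_maximal hne
      exact ⟨x, hx, fun y hy hlt => hlt.2 (hmax hy hlt.1)⟩
    choose aa haaT haamax using hTne
    have haaE : ∀ i (hi : i < k), aa i hi ∈ V.erase a := fun i hi =>
      (Finset.mem_filter.1 (haaT i hi)).1
    have haaf : ∀ i (hi : i < k), f' (aa i hi) = i := fun i hi =>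
      (Finset.mem_filter.1 (haaT i hi)).2.1
    -- every element of T i is below aa i
    have hle : ∀ i (hi : i < k), ∀ x ∈ T i, x ⊆ aa i hi := by
      intro i hi x hx
      have hxE := (Finset.mem_filter.1 hx).1
      have hxf := (Finset.mem_filter.1 hx).2.1
      rcases hf2 x hxE (aa i hi) (haaE i hi) (by rw [hxf, haaf]) with h | h
      · exact h
      · by_cases heq : aa i hi = x
        · exact heq ▸ Finset.Subset.refl _
        · exact absurd (Finset.ssubset_iff_subset_ne.2 ⟨h, heq⟩) (haamax i hi x hx)
    -- the aa's are pairwise incomparable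
    have hkey : ∀ i (hi : i < k), ∀ j (hj : j < k), i ≠ j → ¬ aa i hi ⊆ aa j hj := by
      intro i hi j hj hij hsub
      obtain ⟨A, hAE, hAC, hcard, hmem⟩ := (Finset.mem_filter.1 (haaT j hj)).2.2
      obtain ⟨x, hxA, hxf⟩ := chain_meet hf1 hf2 hAE hAC hcard hi
      have hxT : x ∈ T i := Finset.mem_filter.2 ⟨hAE hxA, hxf, A, hAE, hAC, hcard, hxA⟩
      have hxle : x ⊆ aa j hj := (hle i hi x hxT).trans hsub
      have hxne : x ≠ aa j hj := by
        intro h; rw [h, haaf j hj] at hxf; exact hij hxf.symm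
      exact (hAC x hxA (aa j hj) hmem hxne).1 hxle
    -- find a chain whose top is below a
    have hbelow : ∃ i, ∃ hi : i < k, aa i hi ⊂ a := by
      by_contra hno
      push_neg at hno
      set A : Finset (Finset ρ) :=
        (Finset.range k).attach.image (fun i => aa i.1 (Finset.mem_range.1 i.2)) with hA
      have hinj : Set.InjOn (fun i : {x // x ∈ Finset.range k} =>
          aa i.1 (Finset.mem_range.1 i.2)) (Finset.range k).attach := by
        intro i _ j _ hij
        have h2 : f' (aa i.1 (Finset.mem_range.1 i.2)) = f' (aa j.1 (Finset.mem_range.1 j.2)) :=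
          congrArg f' hij
        rw [haaf, haaf] at h2
        exact Subtype.ext h2
      have hAcard : A.card = k := by
        rw [hA, Finset.card_image_of_injOn hinj, Finset.card_attach, Finset.card_range]
      have haA : a ∉ A := by
        rw [hA]
        intro h
        rw [Finset.mem_image] at h
        obtain ⟨i, _, hi⟩ := h
        have := haaE i.1 (Finset.mem_range.1 i.2)
        rw [hi] at this
        exact (Finset.mem_erase.1 this).1 rfl
      have hmemA : ∀ x ∈ A, ∃ i, ∃ hi : i < k, x = aa i hi := by
        intro x hx
        rw [hA, Finset.mem_image] at hx
        obtain ⟨i, _, hi⟩ := hx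
        exact ⟨i.1, Finset.mem_range.1 i.2, hi.symm⟩
      have hAC : IsAntichainFam (insert a A) := by
        intro u hu v hv huv
        rcases Finset.mem_insert.1 hu with rfl | hu' <;>
          rcases Finset.mem_insert.1 hv with rfl | hv'
        · exact absurd rfl huv
        · obtain ⟨j, hj, rfl⟩ := hmemA v hv'
          constructor
          · intro hsub
            have : u ⊂ aa j hj := Finset.ssubset_iff_subset_ne.2 ⟨hsub, huv⟩
            exact this.2 (hamax ((Finset.erase_subset _ _) (haaE j hj)) this.1)
          · intro hsub
            exact hno j hj (Finset.ssubset_iff_subset_ne.2 ⟨hsub, huv.symm⟩)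
        · obtain ⟨i, hi, rfl⟩ := hmemA u hu'
          constructor
          · intro hsub
            exact hno i hi (Finset.ssubset_iff_subset_ne.2 ⟨hsub, huv⟩)
          · intro hsub
            have : v ⊂ aa i hi := Finset.ssubset_iff_subset_ne.2 ⟨hsub, huv.symm⟩
            exact this.2 (hamax ((Finset.erase_subset _ _) (haaE i hi)) this.1)
        · obtain ⟨i, hi, rfl⟩ := hmemA u hu'
          obtain ⟨j, hj, rfl⟩ := hmemA v hv'
          have hij : i ≠ j := by
            intro h; subst h; exact huv rfl
          exact ⟨hkey i hi j hj hij, hkey j hj i hi hij.symm⟩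
      have hAV : insert a A ⊆ V := by
        intro x hx
        rcases Finset.mem_insert.1 hx with rfl | hx'
        · exact haV
        · obtain ⟨i, hi, rfl⟩ := hmemA x hx'
          exact (Finset.erase_subset _ _) (haaE i hi)
      have := card_le_width hAV hAC
      rw [Finset.card_insert_of_notMem haA, hAcard, hw] at this
      omega
    obtain ⟨i₀, hi₀, hba⟩ := hbelow
    set K : Finset (Finset ρ) :=
      insert a ((V.erase a).filter fun x => f' x = i₀ ∧ x ⊆ aa i₀ hi₀) with hK
    have haK : a ∈ K := Finset.mem_insert_self _ _
    have hKV : K ⊆ V := by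
      intro x hx
      rcases Finset.mem_insert.1 hx with rfl | hx'
      · exact haV
      · exact (Finset.erase_subset _ _) (Finset.mem_filter.1 hx').1
    have hKchain : ∀ x ∈ K, ∀ y ∈ K, x ⊆ y ∨ y ⊆ x := by
      intro x hx y hy
      rcases Finset.mem_insert.1 hx with rfl | hx' <;>
        rcases Finset.mem_insert.1 hy with rfl | hy'
      · exact Or.inl (Finset.Subset.refl _)
      · exact Or.inr ((Finset.mem_filter.1 hy').2.2.trans hba.subset)
      · exact Or.inl ((Finset.mem_filter.1 hx').2.2.trans hba.subset)
      · exact hf2 x (Finset.mem_filter.1 hx').1 y (Finset.mem_filter.1 hy').1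
          (by rw [(Finset.mem_filter.1 hx').2.1, (Finset.mem_filter.1 hy').2.1])
    have hproper : V \ K ⊂ V := Finset.sdiff_ssubset hKV ⟨a, haK⟩
    have hsub' : V \ K ⊆ V.erase a := by
      intro x hx
      rw [Finset.mem_sdiff] at hx
      exact Finset.mem_erase.2 ⟨fun h => hx.2 (h ▸ haK), hx.1⟩
    have hwK : widthFam (V \ K) < k := by
      by_contra h
      push_neg at h
      obtain ⟨A, hAV', hAC, hcard⟩ := width_exists (V \ K)
      obtain ⟨B, hBA, hBcard⟩ := Finset.exists_subset_card_eq (s := A) (n := k) (hcard ▸ h)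
      have hBE : B ⊆ V.erase a := (hBA.trans hAV').trans hsub'
      obtain ⟨x, hxB, hxf⟩ := chain_meet hf1 hf2 hBE (antichainFam_subset hAC hBA) hBcard hi₀
      have hxT : x ∈ T i₀ := Finset.mem_filter.2
        ⟨hBE hxB, hxf, B, hBE, antichainFam_subset hAC hBA, hBcard, hxB⟩
      have hxK : x ∈ K := Finset.mem_insert_of_mem
        (Finset.mem_filter.2 ⟨hBE hxB, hxf, hle i₀ hi₀ x hxT⟩)
      exact (Finset.mem_sdiff.1 (hAV' (hBA hxB))).2 hxK
    obtain ⟨g, hg1, hg2⟩ := ih (V \ K) hproper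
    refine ⟨fun x => if x ∈ K then k - 1 else g x, ?_, ?_⟩
    · intro v hv
      by_cases h : v ∈ K
      · simp only [if_pos h]; omega
      · simp only [if_neg h]
        have := hg1 v (Finset.mem_sdiff.2 ⟨hv, h⟩)
        omega
    · intro u hu v hv huv
      by_cases h1 : u ∈ K <;> by_cases h2 : v ∈ K
      · exact hKchain u h1 v h2
      · exfalso
        simp only [if_pos h1, if_neg h2] at huv
        have := hg1 v (Finset.mem_sdiff.2 ⟨hv, h2⟩)
        omega
      · exfalso
        simp only [if_neg h1, if_pos h2] at huv
        have := hg1 u (Finset.mem_sdiff.2 ⟨hu, h1⟩)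
        omega
      · simp only [if_neg h1, if_neg h2] at huv
        exact hg2 u (Finset.mem_sdiff.2 ⟨hu, h1⟩) v (Finset.mem_sdiff.2 ⟨hv, h2⟩) huv
  · -- easy case: a gets a new color
    have hlt : k < widthFam V := lt_of_le_of_ne hmono (Ne.symm hw)
    refine ⟨fun x => if x = a then k else f' x, ?_, ?_⟩
    · intro v hv
      by_cases h : v = a
      · simpa [h] using hlt
      · simp only [if_neg h]
        exact (hf1 v (Finset.mem_erase.2 ⟨h, hv⟩)).trans_le hmono
    · intro u hu v hv huv
      by_cases h1 : u = a <;> by_cases h2 : v = a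
      · subst h1; subst h2; exact Or.inl (Finset.Subset.refl _)
      · exfalso
        simp only [if_pos h1, if_neg h2] at huv
        have := hf1 v (Finset.mem_erase.2 ⟨h2, hv⟩)
        omega
      · exfalso
        simp only [if_neg h1, if_pos h2] at huv
        have := hf1 u (Finset.mem_erase.2 ⟨h1, hu⟩)
        omega
      · simp only [if_neg h1, if_neg h2] at huv
        exact hf2 u (Finset.mem_erase.2 ⟨h1, hu⟩) v (Finset.mem_erase.2 ⟨h2, hv⟩) huv

end DilworthAux

section GraphAux

variable {m n : ℕ} (M : Matrix (Fin m) (Fin n) Bool) (r : Fin m)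

/-- The support of column `j`. -/
def suppc (j : Fin n) : Finset (Fin m) :=
  Finset.univ.filter fun i => M i j = true

lemma mem_suppc {i : Fin m} {j : Fin n} : i ∈ suppc M j ↔ M i j = true := by
  simp [suppc]

lemma suppc_mem_V {j : Fin n} (h : M r j = true) :
    suppc M j ∈ (suppFamily M).filter fun v => r ∈ v := by
  rw [Finset.mem_filter]
  refine ⟨?_, (mem_suppc M).2 h⟩
  rw [suppFamily, Finset.mem_image]
  exact ⟨j, Finset.mem_univ j, rfl⟩

lemma mem_V_iff {v : Finset (Fin m)} :
    v ∈ ((suppFamily M).filter fun v => r ∈ v) ↔ ∃ j : Fin n, M r j = true ∧ suppc M j = v := by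
  rw [Finset.mem_filter, suppFamily, Finset.mem_image]
  constructor
  · rintro ⟨⟨j, _, rfl⟩, hr⟩
    exact ⟨j, (mem_suppc M).1 hr, rfl⟩
  · rintro ⟨j, hj, rfl⟩
    exact ⟨⟨j, Finset.mem_univ j, rfl⟩, (mem_suppc M).2 hj⟩

lemma adj_iff (x y : {j : Fin n // M r j = true}) :
    (conflictGraph M r).Adj x y ↔ ¬ suppc M x.1 ⊆ suppc M y.1 ∧ ¬ suppc M y.1 ⊆ suppc M x.1 := by
  have key : ∀ i j : Fin n, InConflict M i j → ¬ suppc M i ⊆ suppc M j ∧ ¬ suppc M j ⊆ suppc M i := by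
    rintro i j ⟨_, ⟨q, hq1, hq2⟩, ⟨s, hs1, hs2⟩⟩
    constructor
    · intro hsub
      have := hsub ((mem_suppc M).2 hq1)
      rw [mem_suppc M, hq2] at this
      exact Bool.false_ne_true this
    · intro hsub
      have := hsub ((mem_suppc M).2 hs2)
      rw [mem_suppc M, hs1] at this
      exact Bool.false_ne_true this
  rw [conflictGraph, SimpleGraph.fromRel_adj]
  constructor
  · rintro ⟨hne, h | h⟩
    · exact key _ _ h
    · exact (key _ _ h).symm
  · rintro ⟨h1, h2⟩
    refine ⟨?_, Or.inl ?_⟩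
    · intro h; rw [h] at h1; exact h1 (Finset.Subset.refl _)
    · obtain ⟨q, hq1, hq2⟩ := Finset.not_subset.1 h1
      obtain ⟨s, hs1, hs2⟩ := Finset.not_subset.1 h2
      rw [mem_suppc] at hq1 hs1
      refine ⟨⟨r, x.2, y.2⟩, ⟨q, hq1, ?_⟩, ⟨s, ?_, hs1⟩⟩
      · rw [mem_suppc] at hq2
        exact Bool.eq_false_iff.2 hq2
      · rw [mem_suppc] at hs2
        exact Bool.eq_false_iff.2 hs2

end GraphAux

/-- For every binary matrix `M` and row `r`, the chromatic number of the
conflict graph `G_{M,r}` equals the width of the principal subgraph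
`D_{M,r}` of the containment digraph. -/
theorem stmt6 {m n : ℕ} (M : Matrix (Fin m) (Fin n) Bool) (r : Fin m) :
    (conflictGraph M r).chromaticNumber =
      (widthFam ((suppFamily M).filter fun v => r ∈ v) : ℕ∞) := by
  set V := (suppFamily M).filter fun v => r ∈ v with hVdef
  apply le_antisymm
  · -- chromatic number ≤ width, via Dilworth
    obtain ⟨f, hf1, hf2⟩ := dilworthFam V
    have hcol : (conflictGraph M r).Colorable (widthFam V) := by
      refine ⟨SimpleGraph.Coloring.mk
        (fun x => ⟨f (suppc M x.1), hf1 _ (suppc_mem_V M r x.2)⟩) ?_⟩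
      intro x y hadj hcol
      rw [adj_iff] at hadj
      have heq : f (suppc M x.1) = f (suppc M y.1) := congrArg Fin.val hcol
      rcases hf2 _ (suppc_mem_V M r x.2) _ (suppc_mem_V M r y.2) heq with h | h
      · exact hadj.1 h
      · exact hadj.2 h
    exact hcol.chromaticNumber_le
  · -- width ≤ chromatic number, via a clique
    obtain ⟨A, hAV, hAC, hcard⟩ := width_exists V
    have hchoice : ∀ v ∈ A, ∃ x : {j : Fin n // M r j = true}, suppc M x.1 = v := by
      intro v hv
      obtain ⟨j, hj1, hj2⟩ := (mem_V_iff M r).1 (hAV hv)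
      exact ⟨⟨j, hj1⟩, hj2⟩
    choose g hg using hchoice
    set s : Finset {j : Fin n // M r j = true} :=
      A.attach.image (fun v => g v.1 v.2) with hs
    have hinj : Set.InjOn (fun v : {x // x ∈ A} => g v.1 v.2) A.attach := by
      intro u _ v _ huv
      have : suppc M (g u.1 u.2).1 = suppc M (g v.1 v.2).1 :=
        congrArg (fun x : {j : Fin n // M r j = true} => suppc M x.1) huv
      rw [hg u.1 u.2, hg v.1 v.2] at this
      exact Subtype.ext this
    have hscard : s.card = widthFam V := by
      rw [hs, Finset.card_image_of_injOn hinj, Finset.card_attach, hcard]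
    have hclique : (conflictGraph M r).IsClique s := by
      intro x hx y hy hxy
      simp only [hs, Finset.coe_image, Set.mem_image, Finset.mem_coe,
        Finset.mem_attach] at hx hy
      obtain ⟨u, _, rfl⟩ := hx
      obtain ⟨v, _, rfl⟩ := hy
      have huv : u.1 ≠ v.1 := by
        intro h
        exact hxy (congrArg (fun w : {x // x ∈ A} => g w.1 w.2) (Subtype.ext h))
      rw [adj_iff]
      rw [hg u.1 u.2, hg v.1 v.2]
      exact hAC u.1 u.2 v.1 v.2 huv
    calc (widthFam V : ℕ∞) = (s.card : ℕ∞) := by rw [hscard]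
      _ ≤ (conflictGraph M r).chromaticNumber := hclique.card_le_chromaticNumber
end

section
/- For a binary matrix M, let w(v) = |v| for each vertex v of the containment digraph D_M (the cardinality of the support set). Then the maximum weight α_w(M) of an antichain in D_M with respect to w is at most Σ_{r ∈ R_M} width(D_{M,r}), the sum over rows r of the widths of the principal subgraphs. -/
open Classical Finset

/-- For a binary matrix `M` with vertex weights `w(v) = |v|`, the maximum
weight `α_w(M)` of an antichain in `D_M` is at most the sum, over the rows
`r` of `M`, of the widths of the principal subgraphs `D_{M,r}`. -/
theorem stmt7 {m n : ℕ} (M : Matrix (Fin m) (Fin n) Bool) :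
    alphaW (suppFamily M) ≤
      ∑ r : Fin m, widthFam ((suppFamily M).filter fun v => r ∈ v) := by
  apply Finset.sup_le
  intro S hS
  rw [Finset.mem_filter, Finset.mem_powerset] at hS
  obtain ⟨hSV, hSA⟩ := hS
  have key : ∑ v ∈ S, v.card = ∑ r : Fin m, (S.filter fun v => r ∈ v).card := by
    simp only [Finset.card_filter]
    rw [Finset.sum_comm]
    congr 1
    ext v
    rw [Finset.card_eq_sum_ones]
    simp [Finset.sum_ite_mem]
  rw [key]
  apply Finset.sum_le_sum
  intro r _
  apply Finset.le_sup (f := Finset.card)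
  rw [Finset.mem_filter, Finset.mem_powerset]
  constructor
  · intro v hv
    rw [Finset.mem_filter] at hv ⊢
    exact ⟨hSV hv.1, hv.2⟩
  · intro u hu v hv huv
    rw [Finset.mem_filter] at hu hv
    exact hSA u hu.1 v hv.1 huv
end

section
/- Let M be a binary matrix whose containment digraph D_M has exactly q sinks, where q equals the width of D_M. Then α_w(M) = β(M) = β_ℓ(M), where α_w(M) is the maximum total cardinality of an antichain in D_M, β(M) is the minimum number of uncovered pairs over all branchings, and β_ℓ(M) is the minimum over linear branchings. In particular β(M) equals the sum of cardinalities of the maximal elements. -/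
open Classical Finset

section Aux

variable {ρ : Type*} [DecidableEq ρ]

/-- The sinks (maximal elements) of the family `V`. -/
noncomputable def sinks (V : Finset (Finset ρ)) : Finset (Finset ρ) :=
  V.filter fun v => ∀ w ∈ V, ¬ v ⊂ w

lemma mem_sinks {V : Finset (Finset ρ)} {v : Finset ρ} :
    v ∈ sinks V ↔ v ∈ V ∧ ∀ w ∈ V, ¬ v ⊂ w := Finset.mem_filter

lemma sinks_subset {V : Finset (Finset ρ)} : sinks V ⊆ V := Finset.filter_subset _ _

lemma sinks_antichain (V : Finset (Finset ρ)) : IsAntichainFam (sinks V) := by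
  intro u hu v hv huv
  rw [mem_sinks] at hu hv
  constructor
  · intro hsub
    exact hu.2 v hv.1 (lt_of_le_of_ne hsub huv)
  · intro hsub
    exact hv.2 u hu.1 (lt_of_le_of_ne hsub (Ne.symm huv))

lemma exists_sink_above {V : Finset (Finset ρ)} {v : Finset ρ} (hv : v ∈ V) :
    ∃ s ∈ sinks V, v ⊆ s := by
  obtain ⟨s, hs, hmax⟩ := Finset.exists_maximal (s := V.filter fun w => v ⊆ w)
    ⟨v, Finset.mem_filter.2 ⟨hv, Finset.Subset.refl v⟩⟩
  replace hs := Finset.mem_filter.1 hs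
  refine ⟨s, mem_sinks.2 ⟨hs.1, fun w hw hsw => ?_⟩, hs.2⟩
  exact hsw.2 (hmax (Finset.mem_filter.2 ⟨hw, hs.2.trans hsw.subset⟩) hsw.subset)

lemma card_le_width_s8 {V X : Finset (Finset ρ)} (hXV : X ⊆ V) (hX : IsAntichainFam X) :
    X.card ≤ widthFam V :=
  Finset.le_sup (Finset.mem_filter.2 ⟨Finset.mem_powerset.2 hXV, hX⟩)

/-- Hall matching of an antichain into the sinks, given the width hypothesis. -/
lemma antichain_hall {V : Finset (Finset ρ)} (hw : (sinks V).card = widthFam V)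
    {X : Finset (Finset ρ)} (hXV : X ⊆ V) (hX : IsAntichainFam X) :
    ∃ f : {x // x ∈ X} → Finset ρ, Function.Injective f ∧
      ∀ x, f x ∈ sinks V ∧ (x : Finset ρ) ⊆ f x := by
  have key := (Finset.all_card_le_biUnion_card_iff_existsInjective'
    (fun x : {x // x ∈ X} => (sinks V).filter fun s => (x : Finset ρ) ⊆ s)).1 ?_
  · obtain ⟨f, hfinj, hf⟩ := key
    refine ⟨f, hfinj, fun x => ?_⟩
    have := hf x
    rw [Finset.mem_filter] at this
    exact this
  · intro s
    classical
    set N : Finset (Finset ρ) :=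
      s.biUnion (fun x => (sinks V).filter fun t => (x : Finset ρ) ⊆ t) with hN
    set X' : Finset (Finset ρ) := s.image Subtype.val with hX'
    have hcard : X'.card = s.card :=
      Finset.card_image_of_injective _ Subtype.coe_injective
    have hNsub : N ⊆ sinks V := by
      intro t ht
      rw [hN, Finset.mem_biUnion] at ht
      obtain ⟨x, _, ht⟩ := ht
      exact (Finset.mem_filter.1 ht).1
    have hX'X : X' ⊆ X := by
      intro x hx
      rw [hX', Finset.mem_image] at hx
      obtain ⟨y, _, rfl⟩ := hx
      exact y.2
    -- membership of supersets of X' elements in N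
    have hmemN : ∀ x ∈ X', ∀ t ∈ sinks V, x ⊆ t → t ∈ N := by
      intro x hx t ht hxt
      rw [hX', Finset.mem_image] at hx
      obtain ⟨y, hy, rfl⟩ := hx
      rw [hN, Finset.mem_biUnion]
      exact ⟨y, hy, Finset.mem_filter.2 ⟨ht, hxt⟩⟩
    have hdisj : Disjoint X' (sinks V \ N) := by
      rw [Finset.disjoint_left]
      intro x hx hx'
      rw [Finset.mem_sdiff] at hx'
      exact hx'.2 (hmemN x hx x hx'.1 (Finset.Subset.refl x))
    have hYV : X' ∪ (sinks V \ N) ⊆ V := by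
      intro x hx
      rcases Finset.mem_union.1 hx with h1 | h1
      · exact hXV (hX'X h1)
      · exact sinks_subset ((Finset.mem_sdiff.1 h1).1)
    have hYA : IsAntichainFam (X' ∪ (sinks V \ N)) := by
      intro u hu v hv huv
      rcases Finset.mem_union.1 hu with h1 | h1 <;> rcases Finset.mem_union.1 hv with h2 | h2
      · exact hX u (hX'X h1) v (hX'X h2) huv
      · rw [Finset.mem_sdiff] at h2
        constructor
        · intro hsub
          exact Finset.notMem_sdiff_of_mem_right (hmemN u h1 v h2.1 hsub)
            (Finset.mem_sdiff.2 h2)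
        · intro hsub
          exact (mem_sinks.1 h2.1).2 u (hXV (hX'X h1)) (lt_of_le_of_ne hsub huv.symm)
      · rw [Finset.mem_sdiff] at h1
        constructor
        · intro hsub
          exact (mem_sinks.1 h1.1).2 v (hXV (hX'X h2)) (lt_of_le_of_ne hsub huv)
        · intro hsub
          exact Finset.notMem_sdiff_of_mem_right (hmemN v h2 u h1.1 hsub)
            (Finset.mem_sdiff.2 h1)
      · exact sinks_antichain V u ((Finset.mem_sdiff.1 h1).1) v
          ((Finset.mem_sdiff.1 h2).1) huv
    have hYcard : (X' ∪ (sinks V \ N)).card = X'.card + (sinks V \ N).card :=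
      Finset.card_union_of_disjoint hdisj
    have h1 : (X' ∪ (sinks V \ N)).card ≤ (sinks V).card := by
      rw [hw]; exact card_le_width_s8 hYV hYA
    have h2 : (sinks V \ N).card = (sinks V).card - N.card := Finset.card_sdiff_of_subset hNsub
    have h3 : N.card ≤ (sinks V).card := Finset.card_le_card hNsub
    omega

end Aux
section Aux2

variable {ρ : Type*} [DecidableEq ρ]

/-- Matching every non-sink injectively to a strict superset. -/
lemma exists_matching {V : Finset (Finset ρ)} (hw : (sinks V).card = widthFam V) :
    ∃ g : {v // v ∈ V \ sinks V} → Finset ρ, Function.Injective g ∧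
      ∀ v, g v ∈ V ∧ (v : Finset ρ) ⊂ g v := by
  have key := (Finset.all_card_le_biUnion_card_iff_existsInjective'
    (fun v : {v // v ∈ V \ sinks V} => V.filter fun w => (v : Finset ρ) ⊂ w)).1 ?_
  · obtain ⟨g, hginj, hg⟩ := key
    refine ⟨g, hginj, fun v => ?_⟩
    have := hg v
    rw [Finset.mem_filter] at this
    exact this
  · intro s
    classical
    set N : Finset (Finset ρ) :=
      s.biUnion (fun v => V.filter fun w => (v : Finset ρ) ⊂ w) with hN
    set A : Finset (Finset ρ) := s.image Subtype.val with hA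
    have hcard : A.card = s.card :=
      Finset.card_image_of_injective _ Subtype.coe_injective
    have hAV : A ⊆ V \ sinks V := by
      intro x hx
      rw [hA, Finset.mem_image] at hx
      obtain ⟨y, _, rfl⟩ := hx
      exact y.2
    have hmemN : ∀ x ∈ A, ∀ t ∈ V, x ⊂ t → t ∈ N := by
      intro x hx t ht hxt
      rw [hA, Finset.mem_image] at hx
      obtain ⟨y, hy, rfl⟩ := hx
      rw [hN, Finset.mem_biUnion]
      exact ⟨y, hy, Finset.mem_filter.2 ⟨ht, hxt⟩⟩
    set Amin : Finset (Finset ρ) := A.filter fun v => ∀ u ∈ A, ¬ u ⊂ v with hAmin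
    have hAminA : Amin ⊆ A := Finset.filter_subset _ _
    have hAminV : Amin ⊆ V := fun x hx => (Finset.mem_sdiff.1 (hAV (hAminA hx))).1
    have hAminAC : IsAntichainFam Amin := by
      intro u hu v hv huv
      rw [hAmin, Finset.mem_filter] at hu hv
      constructor
      · intro hsub
        exact hv.2 u hu.1 (lt_of_le_of_ne hsub huv)
      · intro hsub
        exact hu.2 v hv.1 (lt_of_le_of_ne hsub (Ne.symm huv))
    obtain ⟨f, hfinj, hf⟩ := antichain_hall hw hAminV hAminAC
    -- the image of f
    set F : Finset (Finset ρ) := Amin.attach.image f with hF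
    have hFcard : F.card = Amin.card := by
      rw [hF, Finset.card_image_of_injective _ hfinj, Finset.card_attach]
    have hFN : F ⊆ N := by
      intro t ht
      rw [hF, Finset.mem_image] at ht
      obtain ⟨x, _, rfl⟩ := ht
      have hx1 := (hf x).1
      have hx2 := (hf x).2
      have hxA : (x : Finset ρ) ∈ A := hAminA x.2
      have hxns : (x : Finset ρ) ∉ sinks V := (Finset.mem_sdiff.1 (hAV hxA)).2
      have hne : (x : Finset ρ) ≠ f x := by
        intro hEq
        exact hxns (hEq ▸ hx1)
      exact hmemN _ hxA _ (sinks_subset hx1) (lt_of_le_of_ne hx2 hne)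
    have hANmin : A \ Amin ⊆ N := by
      intro w hwmem
      rw [Finset.mem_sdiff] at hwmem
      obtain ⟨hwA, hwnmin⟩ := hwmem
      rw [hAmin, Finset.mem_filter] at hwnmin
      push_neg at hwnmin
      obtain ⟨u, huA, huw⟩ := hwnmin hwA
      exact hmemN u huA w ((Finset.mem_sdiff.1 (hAV hwA)).1) huw
    have hdisj : Disjoint (A \ Amin) F := by
      rw [Finset.disjoint_left]
      intro t ht htF
      rw [hF, Finset.mem_image] at htF
      obtain ⟨x, _, rfl⟩ := htF
      have : f x ∈ sinks V := (hf x).1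
      exact (Finset.mem_sdiff.1 (hAV ((Finset.mem_sdiff.1 ht).1))).2 this
    have hsubN : (A \ Amin) ∪ F ⊆ N := Finset.union_subset hANmin hFN
    have hcount : (A \ Amin).card + F.card ≤ N.card := by
      rw [← Finset.card_union_of_disjoint hdisj]
      exact Finset.card_le_card hsubN
    have hsd : (A \ Amin).card = A.card - Amin.card := Finset.card_sdiff_of_subset hAminA
    have hle : Amin.card ≤ A.card := Finset.card_le_card hAminA
    omega

/-- Lower bound: every branching has at least `∑_{v ∈ sinks} |v|` uncovered pairs. -/
lemma uncov_lower {V : Finset (Finset ρ)} {B : Finset (Finset ρ × Finset ρ)}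
    (hB : IsBranching V B) : ∑ v ∈ sinks V, v.card ≤ uncov V B := by
  classical
  -- pointwise bound
  have hpt : ∀ v ∈ V, v.card ≤ nuB B v + ∑ p ∈ B.filter (fun p => p.2 = v), p.1.card := by
    intro v hv
    set U : Finset ρ := (B.filter fun p => p.2 = v).sup fun p => p.1 with hU
    have h1 : v.card ≤ (v \ U).card + U.card := by
      have hsub : v ⊆ (v \ U) ∪ U := by
        intro a ha
        by_cases haU : a ∈ U
        · exact Finset.mem_union_right _ haU
        · exact Finset.mem_union_left _ (Finset.mem_sdiff.2 ⟨ha, haU⟩)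
      calc v.card ≤ ((v \ U) ∪ U).card := Finset.card_le_card hsub
        _ ≤ (v \ U).card + U.card := Finset.card_union_le _ _
    have h2 : U.card ≤ ∑ p ∈ B.filter (fun p => p.2 = v), p.1.card := by
      rw [hU, Finset.sup_eq_biUnion]
      exact Finset.card_biUnion_le
    have : nuB B v = (v \ U).card := rfl
    omega
  have hsum : ∑ v ∈ V, v.card ≤ uncov V B + ∑ p ∈ B, p.1.card := by
    have := Finset.sum_le_sum hpt
    rw [Finset.sum_add_distrib] at this
    have hfib : ∑ v ∈ V, ∑ p ∈ B.filter (fun p => p.2 = v), p.1.card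
        = ∑ p ∈ B, p.1.card :=
      Finset.sum_fiberwise_of_maps_to (fun p hp => ((hB.1 p hp).2.1)) _
    rw [hfib] at this
    exact this
  have himg : ∑ p ∈ B, p.1.card = ∑ u ∈ B.image Prod.fst, u.card := by
    rw [Finset.sum_image]
    intro p hp q hq hpq
    have := hB.2 p hp q hq hpq
    exact Prod.ext hpq this
  have hsubset : B.image Prod.fst ⊆ V \ sinks V := by
    intro u hu
    rw [Finset.mem_image] at hu
    obtain ⟨p, hp, rfl⟩ := hu
    obtain ⟨h1, h2, h3⟩ := hB.1 p hp
    rw [Finset.mem_sdiff]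
    refine ⟨h1, fun hs => ?_⟩
    exact (mem_sinks.1 hs).2 p.2 h2 h3
  have himgle : ∑ u ∈ B.image Prod.fst, u.card ≤ ∑ u ∈ V \ sinks V, u.card :=
    Finset.sum_le_sum_of_subset hsubset
  have hsplit : ∑ v ∈ sinks V, v.card + ∑ v ∈ V \ sinks V, v.card = ∑ v ∈ V, v.card := by
    rw [show V \ sinks V = V.filter fun v => ¬ ∀ w ∈ V, ¬ v ⊂ w from
      (Finset.filter_not _ _).symm]
    exact Finset.sum_filter_add_sum_filter_not _ _ _
  omega

end Aux2
section Aux3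

variable {ρ : Type*} [DecidableEq ρ]

lemma sinks_eq (V : Finset (Finset ρ)) :
    sinks V = V.filter fun v => ∀ w ∈ V, ¬ v ⊂ w := rfl

/-- There is a linear branching achieving `∑_{v ∈ sinks} |v|` uncovered pairs. -/
lemma exists_good_branching {V : Finset (Finset ρ)}
    (hw : (sinks V).card = widthFam V) :
    ∃ B, IsBranching V B ∧ IsLinear B ∧ uncov V B = ∑ v ∈ sinks V, v.card := by
  classical
  obtain ⟨g, hginj, hg⟩ := exists_matching hw
  set B0 : Finset (Finset ρ × Finset ρ) :=
    (V \ sinks V).attach.image (fun v : {v // v ∈ V \ sinks V} => ((v : Finset ρ), g v)) with hB0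
  have hmem : ∀ p ∈ B0, ∃ v : {v // v ∈ V \ sinks V}, ((v : Finset ρ), g v) = p := by
    intro p hp
    rw [hB0, Finset.mem_image] at hp
    obtain ⟨v, _, hv⟩ := hp
    exact ⟨v, hv⟩
  have hBr : IsBranching V B0 := by
    constructor
    · intro p hp
      obtain ⟨v, rfl⟩ := hmem p hp
      exact ⟨(Finset.mem_sdiff.1 v.2).1, (hg v).1, (hg v).2⟩
    · intro p hp q hq hpq
      obtain ⟨v, rfl⟩ := hmem p hp
      obtain ⟨u, rfl⟩ := hmem q hq
      simp only at hpq ⊢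
      have : v = u := Subtype.ext hpq
      rw [this]
  have hLin : IsLinear B0 := by
    intro p hp q hq hpq
    obtain ⟨v, rfl⟩ := hmem p hp
    obtain ⟨u, rfl⟩ := hmem q hq
    simp only at hpq ⊢
    rw [hginj hpq]
  refine ⟨B0, hBr, hLin, ?_⟩
  -- per-vertex computation
  have key : ∀ w ∈ V, nuB B0 w + ∑ p ∈ B0.filter (fun p => p.2 = w), p.1.card
      = w.card := by
    intro w hw'
    set Fw := B0.filter (fun p => p.2 = w) with hFw
    have huniq : ∀ p ∈ Fw, ∀ q ∈ Fw, p = q := by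
      intro p hp q hq
      rw [hFw, Finset.mem_filter] at hp hq
      have h1 : p.1 = q.1 := hLin p hp.1 q hq.1 (hp.2.trans hq.2.symm)
      have h2 : p.2 = q.2 := hp.2.trans hq.2.symm
      exact Prod.ext h1 h2
    rcases Finset.eq_empty_or_nonempty Fw with hE | ⟨p0, hp0⟩
    · have : nuB B0 w = (w \ Fw.sup fun p => p.1).card := rfl
      rw [this, hE]
      simp
    · have hsingle : Fw = {p0} :=
        Finset.eq_singleton_iff_unique_mem.2 ⟨hp0, fun q hq => huniq q hq p0 hp0⟩
      have hp0B : p0 ∈ B0 := (Finset.mem_filter.1 hp0).1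
      have hp0w : p0.2 = w := (Finset.mem_filter.1 hp0).2
      obtain ⟨v, hv⟩ := hmem p0 hp0B
      have hsub : p0.1 ⊆ w := by
        have : p0.1 ⊂ p0.2 := by
          rw [← hv]; exact (hg v).2
        rw [hp0w] at this
        exact this.subset
      have : nuB B0 w = (w \ Fw.sup fun p => p.1).card := rfl
      rw [this, hsingle, Finset.sup_singleton, Finset.sum_singleton,
        Finset.card_sdiff_of_subset hsub]
      exact Nat.sub_add_cancel (Finset.card_le_card hsub)
  have hsum : uncov V B0 + ∑ p ∈ B0, p.1.card = ∑ w ∈ V, w.card := by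
    have hfib : ∑ w ∈ V, ∑ p ∈ B0.filter (fun p => p.2 = w), p.1.card
        = ∑ p ∈ B0, p.1.card :=
      Finset.sum_fiberwise_of_maps_to (fun p hp => (hBr.1 p hp).2.1) _
    calc uncov V B0 + ∑ p ∈ B0, p.1.card
        = ∑ w ∈ V, nuB B0 w + ∑ w ∈ V, ∑ p ∈ B0.filter (fun p => p.2 = w), p.1.card := by
          rw [hfib]; rfl
      _ = ∑ w ∈ V, (nuB B0 w + ∑ p ∈ B0.filter (fun p => p.2 = w), p.1.card) :=
          (Finset.sum_add_distrib).symm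
      _ = ∑ w ∈ V, w.card := Finset.sum_congr rfl key
  have htails : ∑ p ∈ B0, p.1.card = ∑ v ∈ V \ sinks V, v.card := by
    rw [hB0, Finset.sum_image ?hinj]
    case hinj =>
      intro p hp q hq hpq
      exact Subtype.ext (congrArg Prod.fst hpq)
    exact Finset.sum_attach _ _
  have hsplit : ∑ v ∈ sinks V, v.card + ∑ v ∈ V \ sinks V, v.card
      = ∑ v ∈ V, v.card := by
    rw [show V \ sinks V = V.filter fun v => ¬ ∀ w ∈ V, ¬ v ⊂ w from
      (Finset.filter_not _ _).symm]
    exact Finset.sum_filter_add_sum_filter_not _ _ _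
  omega

lemma beta_eq {V : Finset (Finset ρ)} (hw : (sinks V).card = widthFam V) :
    beta V = ∑ v ∈ sinks V, v.card := by
  obtain ⟨B0, hBr, hLin, huncov⟩ := exists_good_branching hw
  have hne : {k | ∃ B, IsBranching V B ∧ uncov V B = k}.Nonempty :=
    ⟨∑ v ∈ sinks V, v.card, B0, hBr, huncov⟩
  have hle : beta V ≤ ∑ v ∈ sinks V, v.card :=
    Nat.sInf_le ⟨B0, hBr, huncov⟩
  have hge : ∑ v ∈ sinks V, v.card ≤ beta V := by
    obtain ⟨B, hB, hu⟩ := Nat.sInf_mem hne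
    rw [beta, ← hu]
    exact uncov_lower hB
  omega

lemma betaL_eq {V : Finset (Finset ρ)} (hw : (sinks V).card = widthFam V) :
    betaL V = ∑ v ∈ sinks V, v.card := by
  obtain ⟨B0, hBr, hLin, huncov⟩ := exists_good_branching hw
  have hne : {k | ∃ B, IsBranching V B ∧ IsLinear B ∧ uncov V B = k}.Nonempty :=
    ⟨∑ v ∈ sinks V, v.card, B0, hBr, hLin, huncov⟩
  have hle : betaL V ≤ ∑ v ∈ sinks V, v.card :=
    Nat.sInf_le ⟨B0, hBr, hLin, huncov⟩
  have hge : ∑ v ∈ sinks V, v.card ≤ betaL V := by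
    obtain ⟨B, hB, _, hu⟩ := Nat.sInf_mem hne
    rw [betaL, ← hu]
    exact uncov_lower hB
  omega

lemma alphaW_eq {V : Finset (Finset ρ)} (hw : (sinks V).card = widthFam V) :
    alphaW V = ∑ v ∈ sinks V, v.card := by
  apply le_antisymm
  · apply Finset.sup_le
    intro X hX
    rw [Finset.mem_filter, Finset.mem_powerset] at hX
    obtain ⟨hXV, hXA⟩ := hX
    obtain ⟨f, hfinj, hf⟩ := antichain_hall hw hXV hXA
    calc ∑ x ∈ X, x.card
        = ∑ x ∈ X.attach, (x : Finset ρ).card := (Finset.sum_attach _ _).symm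
      _ ≤ ∑ x ∈ X.attach, (f x).card :=
          Finset.sum_le_sum fun x _ => Finset.card_le_card (hf x).2
      _ = ∑ t ∈ X.attach.image f, t.card := by
          rw [Finset.sum_image fun p _ q _ hpq => hfinj hpq]
      _ ≤ ∑ t ∈ sinks V, t.card := by
          apply Finset.sum_le_sum_of_subset
          intro t ht
          rw [Finset.mem_image] at ht
          obtain ⟨x, _, rfl⟩ := ht
          exact (hf x).1
  · show ∑ v ∈ sinks V, v.card ≤ (V.powerset.filter IsAntichainFam).sup fun S => ∑ v ∈ S, v.card
    exact Finset.le_sup (f := fun S => ∑ v ∈ S, v.card)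
      (Finset.mem_filter.2 ⟨Finset.mem_powerset.2 sinks_subset, sinks_antichain V⟩)

end Aux3
/-- If the containment digraph `D_M` of a binary matrix `M` has exactly `q`
sinks, where `q` is the width of `D_M`, then
`α_w(M) = β(M) = β_ℓ(M)`, and `β(M)` equals the sum of the cardinalities of
the maximal elements. -/
theorem stmt8 {m n : ℕ} (M : Matrix (Fin m) (Fin n) Bool)
    (h : ((suppFamily M).filter fun v =>
            ∀ w ∈ suppFamily M, ¬ v ⊂ w).card = widthFam (suppFamily M)) :
    alphaW (suppFamily M) = beta (suppFamily M) ∧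
    beta (suppFamily M) = betaL (suppFamily M) ∧
    beta (suppFamily M) =
      ∑ v ∈ (suppFamily M).filter (fun v => ∀ w ∈ suppFamily M, ¬ v ⊂ w),
        v.card := by
  have hfeq : ((suppFamily M).filter fun v => ∀ w ∈ suppFamily M, ¬ v ⊂ w)
      = sinks (suppFamily M) := by
    rw [sinks_eq]
    congr
  have hw : (sinks (suppFamily M)).card = widthFam (suppFamily M) := by
    rw [← hfeq]; exact h
  refine ⟨(alphaW_eq hw).trans (beta_eq hw).symm,
    (beta_eq hw).trans (betaL_eq hw).symm, ?_⟩
  rw [hfeq]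
  exact beta_eq hw
end

section
/- Let D_M be a containment digraph and N a maximum antichain of D_M. Then the uncovering number of D_M equals the uncovering number of the induced subdigraph D_M[N ∪ V_N^+], i.e., β(D_M) = β(D_M[N ∪ V_N^+]). -/
open Classical Finset

section DescAux
variable {ρ : Type*} [DecidableEq ρ]

/-- The list of the descent path from `v` along chosen `r`-covering in-arcs of `B`. -/
noncomputable def descL (B : Finset (Finset ρ × Finset ρ))
    (hB : ∀ p ∈ B, p.1 ⊂ p.2) (r : ρ) (v : Finset ρ) : List (Finset ρ) :=
  if h : ∃ p, p ∈ B ∧ p.2 = v ∧ r ∈ p.1 then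
    v :: descL B hB r h.choose.1
  else [v]
termination_by v.card
decreasing_by
  have hs := h.choose_spec
  have h2 := hB _ hs.1
  rw [hs.2.1] at h2
  exact Finset.card_lt_card h2

/-- The endpoint of the descent from `v`. -/
noncomputable def descE (B : Finset (Finset ρ × Finset ρ))
    (hB : ∀ p ∈ B, p.1 ⊂ p.2) (r : ρ) (v : Finset ρ) : Finset ρ :=
  if h : ∃ p, p ∈ B ∧ p.2 = v ∧ r ∈ p.1 then
    descE B hB r h.choose.1
  else v
termination_by v.card
decreasing_by
  have hs := h.choose_spec
  have h2 := hB _ hs.1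
  rw [hs.2.1] at h2
  exact Finset.card_lt_card h2

variable {B : Finset (Finset ρ × Finset ρ)} {r : ρ}

set_option linter.unusedSectionVars false

lemma choice_lt (hB : ∀ p ∈ B, p.1 ⊂ p.2) {v : Finset ρ}
    (h : ∃ p, p ∈ B ∧ p.2 = v ∧ r ∈ p.1) : h.choose.1 ⊂ v := by
  have hs := h.choose_spec
  have h2 := hB _ hs.1
  rwa [hs.2.1] at h2

lemma descL_eq_pos (hB : ∀ p ∈ B, p.1 ⊂ p.2) {v : Finset ρ}
    (h : ∃ p, p ∈ B ∧ p.2 = v ∧ r ∈ p.1) :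
    descL B hB r v = v :: descL B hB r h.choose.1 := by
  rw [descL, dif_pos h]

lemma self_mem_descL (hB : ∀ p ∈ B, p.1 ⊂ p.2) (v : Finset ρ) :
    v ∈ descL B hB r v := by
  rw [descL]
  split_ifs <;> simp

lemma descE_mem_descL (hB : ∀ p ∈ B, p.1 ⊂ p.2) (v : Finset ρ) :
    descE B hB r v ∈ descL B hB r v := by
  induction v using Finset.strongInduction with
  | _ v ih =>
    rw [descE, descL]
    by_cases h : ∃ p, p ∈ B ∧ p.2 = v ∧ r ∈ p.1
    · rw [dif_pos h, dif_pos h]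
      exact List.mem_cons_of_mem _ (ih _ (choice_lt hB h))
    · rw [dif_neg h, dif_neg h]; simp

lemma descE_uncovered (hB : ∀ p ∈ B, p.1 ⊂ p.2) (v : Finset ρ) :
    ¬ ∃ p, p ∈ B ∧ p.2 = descE B hB r v ∧ r ∈ p.1 := by
  induction v using Finset.strongInduction with
  | _ v ih =>
    rw [descE]
    by_cases h : ∃ p, p ∈ B ∧ p.2 = v ∧ r ∈ p.1
    · rw [dif_pos h]; exact ih _ (choice_lt hB h)
    · rw [dif_neg h]; exact h

lemma r_mem_descE (hB : ∀ p ∈ B, p.1 ⊂ p.2) (v : Finset ρ) (hr : r ∈ v) :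
    r ∈ descE B hB r v := by
  induction v using Finset.strongInduction with
  | _ v ih =>
    rw [descE]
    by_cases h : ∃ p, p ∈ B ∧ p.2 = v ∧ r ∈ p.1
    · rw [dif_pos h]; exact ih _ (choice_lt hB h) h.choose_spec.2.2
    · rw [dif_neg h]; exact hr

lemma descL_closed (hB : ∀ p ∈ B, p.1 ⊂ p.2) (S : Finset (Finset ρ))
    (hS : ∀ p ∈ B, p.2 ∈ S → p.1 ∈ S) (v : Finset ρ) (hv : v ∈ S) :
    ∀ x ∈ descL B hB r v, x ∈ S := by
  induction v using Finset.strongInduction with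
  | _ v ih =>
    intro x hx
    rw [descL] at hx
    by_cases h : ∃ p, p ∈ B ∧ p.2 = v ∧ r ∈ p.1
    · rw [dif_pos h] at hx
      rcases List.mem_cons.1 hx with rfl | hx
      · exact hv
      · exact ih _ (choice_lt hB h)
          (hS _ h.choose_spec.1 (by rw [h.choose_spec.2.1]; exact hv)) x hx
    · rw [dif_neg h] at hx
      have : x = v := by simpa using hx
      exact this ▸ hv

lemma descL_suffix_of_mem (hB : ∀ p ∈ B, p.1 ⊂ p.2) (v : Finset ρ) :
    ∀ x ∈ descL B hB r v, descL B hB r x <:+ descL B hB r v := by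
  induction v using Finset.strongInduction with
  | _ v ih =>
    intro x hx
    rw [descL] at hx
    by_cases h : ∃ p, p ∈ B ∧ p.2 = v ∧ r ∈ p.1
    · rw [dif_pos h] at hx
      rcases List.mem_cons.1 hx with rfl | hx
      · exact List.suffix_refl _
      · refine (ih _ (choice_lt hB h) x hx).trans ?_
        rw [descL_eq_pos hB h]
        exact List.suffix_cons _ _
    · rw [dif_neg h] at hx
      have : x = v := by simpa using hx
      subst this
      exact List.suffix_refl _

lemma descL_pred (hB : ∀ p ∈ B, p.1 ⊂ p.2) (v : Finset ρ) :
    ∀ x ∈ descL B hB r v, x = v ∨ ∃ z, (x, z) ∈ B ∧ z ∈ descL B hB r v := by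
  induction v using Finset.strongInduction with
  | _ v ih =>
    intro x hx
    rw [descL] at hx
    by_cases h : ∃ p, p ∈ B ∧ p.2 = v ∧ r ∈ p.1
    · rw [dif_pos h] at hx
      rcases List.mem_cons.1 hx with rfl | hx
      · exact Or.inl rfl
      · rcases ih _ (choice_lt hB h) x hx with rfl | ⟨z, hz, hzmem⟩
        · refine Or.inr ⟨v, ?_, self_mem_descL hB v⟩
          have hs := h.choose_spec
          have he : (h.choose.1, v) = h.choose := by
            rw [Prod.ext_iff]
            exact ⟨rfl, hs.2.1.symm⟩
          have hb := hs.1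
          rw [← he] at hb
          exact hb
        · refine Or.inr ⟨z, hz, ?_⟩
          rw [descL_eq_pos hB h]
          exact List.mem_cons_of_mem _ hzmem
    · rw [dif_neg h] at hx
      exact Or.inl (by simpa using hx)

lemma descE_eq_pos (hB : ∀ p ∈ B, p.1 ⊂ p.2) {v : Finset ρ}
    (h : ∃ p, p ∈ B ∧ p.2 = v ∧ r ∈ p.1) :
    descE B hB r v = descE B hB r h.choose.1 := by
  rw [descE, dif_pos h]

lemma descE_eq_neg (hB : ∀ p ∈ B, p.1 ⊂ p.2) {v : Finset ρ}
    (h : ¬ ∃ p, p ∈ B ∧ p.2 = v ∧ r ∈ p.1) :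
    descE B hB r v = v := by
  rw [descE, dif_neg h]

lemma descL_step_suffix (hB : ∀ p ∈ B, p.1 ⊂ p.2)
    (hfun : ∀ p ∈ B, ∀ q ∈ B, p.1 = q.1 → p.2 = q.2)
    {v₁ v₂ : Finset ρ}
    (h₁ : ∃ p, p ∈ B ∧ p.2 = v₁ ∧ r ∈ p.1)
    (h₂ : ∃ p, p ∈ B ∧ p.2 = v₂ ∧ r ∈ p.1)
    (hsuf : descL B hB r h₁.choose.1 <:+ descL B hB r h₂.choose.1) :
    descL B hB r v₁ <:+ descL B hB r v₂ := by
  have hs₁ := h₁.choose_spec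
  have hs₂ := h₂.choose_spec
  have hmem : h₁.choose.1 ∈ descL B hB r h₂.choose.1 :=
    hsuf.mem (self_mem_descL hB _)
  rcases descL_pred hB _ _ hmem with heq | ⟨z, hz, hzmem⟩
  · have hv : v₁ = v₂ := by
      have := hfun _ hs₁.1 _ hs₂.1 heq
      rw [hs₁.2.1, hs₂.2.1] at this
      exact this
    subst hv
    exact List.suffix_refl _
  · have hzv : z = v₁ := by
      have := hfun _ hz _ hs₁.1 rfl
      rw [hs₁.2.1] at this
      exact this
    subst hzv
    refine (descL_suffix_of_mem hB _ _ hzmem).trans ?_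
    rw [descL_eq_pos hB h₂]
    exact List.suffix_cons _ _

lemma descE_suffix_or (hB : ∀ p ∈ B, p.1 ⊂ p.2)
    (hfun : ∀ p ∈ B, ∀ q ∈ B, p.1 = q.1 → p.2 = q.2)
    (v₁ v₂ : Finset ρ) (heq : descE B hB r v₁ = descE B hB r v₂) :
    descL B hB r v₁ <:+ descL B hB r v₂ ∨ descL B hB r v₂ <:+ descL B hB r v₁ := by
  suffices H : ∀ n (v₁ v₂ : Finset ρ), v₁.card + v₂.card = n →
      descE B hB r v₁ = descE B hB r v₂ →
      (descL B hB r v₁ <:+ descL B hB r v₂ ∨ descL B hB r v₂ <:+ descL B hB r v₁) by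
    exact H _ v₁ v₂ rfl heq
  intro n
  induction n using Nat.strong_induction_on with
  | _ n ih =>
    intro v₁ v₂ hn heq
    by_cases h₁ : ∃ p, p ∈ B ∧ p.2 = v₁ ∧ r ∈ p.1
    · by_cases h₂ : ∃ p, p ∈ B ∧ p.2 = v₂ ∧ r ∈ p.1
      · have heq' : descE B hB r h₁.choose.1 = descE B hB r h₂.choose.1 := by
          rw [← descE_eq_pos hB h₁, ← descE_eq_pos hB h₂]
          exact heq
        have hc₁ := Finset.card_lt_card (choice_lt hB h₁)
        have hc₂ := Finset.card_lt_card (choice_lt hB h₂)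
        have hlt : h₁.choose.1.card + h₂.choose.1.card < n := by omega
        rcases ih _ hlt _ _ rfl heq' with hs | hs
        · exact Or.inl (descL_step_suffix hB hfun h₁ h₂ hs)
        · exact Or.inr (descL_step_suffix hB hfun h₂ h₁ hs)
      · have e₂ : descE B hB r v₂ = v₂ := descE_eq_neg hB h₂
        have hv : v₂ ∈ descL B hB r v₁ := by
          have h' := descE_mem_descL hB (r := r) v₁
          rwa [heq, e₂] at h'
        exact Or.inr (descL_suffix_of_mem hB _ _ hv)
    · have e₁ : descE B hB r v₁ = v₁ := descE_eq_neg hB h₁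
      have hv : v₁ ∈ descL B hB r v₂ := by
        have h' := descE_mem_descL hB (r := r) v₂
        rwa [← heq, e₁] at h'
      exact Or.inl (descL_suffix_of_mem hB _ _ hv)

lemma descE_inj (hB : ∀ p ∈ B, p.1 ⊂ p.2)
    (hfun : ∀ p ∈ B, ∀ q ∈ B, p.1 = q.1 → p.2 = q.2)
    (W S : Finset (Finset ρ))
    (hdisj : ∀ x ∈ S, x ∉ W)
    (hSdown : ∀ p ∈ B, p.2 ∈ S → p.1 ∈ S)
    (htail : ∀ p ∈ B, p.1 ∈ W ∨ p.1 ∈ S)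
    {v₁ v₂ : Finset ρ}
    (hv₁ : v₁ ∈ W) (hv₂ : v₂ ∈ W)
    (hu₁ : ¬ ∃ p, p ∈ B ∧ p.2 = v₁ ∧ r ∈ p.1 ∧ p.1 ∈ W)
    (hu₂ : ¬ ∃ p, p ∈ B ∧ p.2 = v₂ ∧ r ∈ p.1 ∧ p.1 ∈ W)
    (heq : descE B hB r v₁ = descE B hB r v₂) : v₁ = v₂ := by
  have main : ∀ a b : Finset ρ, a ∈ W →
      (¬ ∃ p, p ∈ B ∧ p.2 = b ∧ r ∈ p.1 ∧ p.1 ∈ W) →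
      descL B hB r a <:+ descL B hB r b → a = b := by
    intro a b ha hub hsuf
    have hmem : a ∈ descL B hB r b := hsuf.mem (self_mem_descL hB a)
    by_cases h : ∃ p, p ∈ B ∧ p.2 = b ∧ r ∈ p.1
    · rw [descL_eq_pos hB h] at hmem
      rcases List.mem_cons.1 hmem with rfl | hmem
      · rfl
      · exfalso
        have hs := h.choose_spec
        have hu : h.choose.1 ∈ S := by
          rcases htail _ hs.1 with hw | hs'
          · exact absurd ⟨h.choose, hs.1, hs.2.1, hs.2.2, hw⟩ hub
          · exact hs'
        exact hdisj a (descL_closed hB S hSdown _ hu a hmem) ha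
    · rw [descL, dif_neg h] at hmem
      simpa using hmem
  rcases descE_suffix_or hB hfun v₁ v₂ heq with hs | hs
  · exact main v₁ v₂ hv₁ hu₂ hs
  · exact (main v₂ v₁ hv₂ hu₁ hs).symm

end DescAux

section USAux
variable {ρ : Type*} [DecidableEq ρ]

/-- The union of the in-neighbours of `v` in `B`. -/
noncomputable def covB (B : Finset (Finset ρ × Finset ρ)) (v : Finset ρ) : Finset ρ :=
  (B.filter fun p => p.2 = v).sup fun p => p.1

lemma mem_covB {B : Finset (Finset ρ × Finset ρ)} {v : Finset ρ} {x : ρ} :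
    x ∈ covB B v ↔ ∃ p, p ∈ B ∧ p.2 = v ∧ x ∈ p.1 := by
  simp only [covB, Finset.mem_sup, Finset.mem_filter]
  tauto

lemma nuB_eq {B : Finset (Finset ρ × Finset ρ)} {v : Finset ρ} :
    nuB B v = (v \ covB B v).card := rfl

/-- The finset of uncovered pairs. -/
noncomputable def US (V : Finset (Finset ρ)) (B : Finset (Finset ρ × Finset ρ)) :
    Finset (Finset ρ × ρ) :=
  V.biUnion fun v => (v \ covB B v).image fun r => (v, r)

lemma mem_US {V : Finset (Finset ρ)} {B : Finset (Finset ρ × Finset ρ)}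
    {p : Finset ρ × ρ} :
    p ∈ US V B ↔ p.1 ∈ V ∧ p.2 ∈ p.1 \ covB B p.1 := by
  constructor
  · simp only [US, Finset.mem_biUnion, Finset.mem_image]
    rintro ⟨v, hv, r, hr, rfl⟩
    exact ⟨hv, hr⟩
  · rintro ⟨h1, h2⟩
    simp only [US, Finset.mem_biUnion, Finset.mem_image]
    exact ⟨p.1, h1, p.2, h2, rfl⟩

lemma card_US (V : Finset (Finset ρ)) (B : Finset (Finset ρ × Finset ρ)) :
    (US V B).card = uncov V B := by
  rw [US, Finset.card_biUnion]
  · refine Finset.sum_congr rfl fun v hv => ?_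
    rw [Finset.card_image_of_injective _ (fun a b h => (Prod.mk.injEq _ _ _ _ ▸ h : _ ∧ _).2)]
    rfl
  · intro x hx y hy hxy
    simp only [Finset.disjoint_left, Finset.mem_image]
    rintro a ⟨r, hr, rfl⟩ ⟨r', hr', ha⟩
    exact hxy ((Prod.mk.injEq _ _ _ _ ▸ ha.symm : _ ∧ _).1)

end USAux

/-- For a maximum antichain `N` of a containment digraph `D_M`,
`β(D_M) = β(D_M[N ∪ V_N^+])`. -/
theorem stmt11 {m n : ℕ} (M : Matrix (Fin m) (Fin n) Bool)
    (N : Finset (Finset (Fin m))) (hN : N ⊆ suppFamily M)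
    (hanti : IsAntichainFam N)
    (hmax : ∀ S ⊆ suppFamily M, IsAntichainFam S → S.card ≤ N.card) :
    beta (suppFamily M) =
      beta (N ∪ (suppFamily M).filter fun v => v ∉ N ∧ ∃ u ∈ N, u ⊂ v) := by
  classical
  set V := suppFamily M with hVdef
  set W := N ∪ (suppFamily M).filter (fun v => v ∉ N ∧ ∃ u ∈ N, u ⊂ v) with hWdef
  have hWV : W ⊆ V := Finset.union_subset hN (Finset.filter_subset _ _)
  set Q := V \ W with hQdef
  have hNW : N ⊆ W := Finset.subset_union_left
  have hmemWf : ∀ v, v ∈ V → v ∉ N → (∃ u ∈ N, u ⊂ v) → v ∈ W := by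
    intro v h1 h2 h3
    exact Finset.mem_union_right _ (Finset.mem_filter.2 ⟨h1, h2, h3⟩)
  have hF5 : ∀ w ∈ W, ∀ n' ∈ N, ¬ w ⊂ n' := by
    intro w hw n' hn' hsub
    rcases Finset.mem_union.1 hw with hwN | hwF
    · exact (hanti w hwN n' hn' hsub.ne).1 hsub.subset
    · obtain ⟨hwV, hwnN, u, hu, huw⟩ := Finset.mem_filter.1 hwF
      have hun : u ⊂ n' := huw.trans hsub
      exact (hanti u hu n' hn' hun.ne).1 hun.subset
  have hQdown : ∀ w v : Finset (Fin m), w ∈ V → w ⊂ v → v ∈ Q → w ∈ Q := by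
    intro w v hwV hwv hvQ
    rw [hQdef, Finset.mem_sdiff] at hvQ ⊢
    refine ⟨hwV, fun hwW => hvQ.2 ?_⟩
    rcases Finset.mem_union.1 hwW with hwN | hwF
    · exact hmemWf v hvQ.1 (fun hvN => (hanti w hwN v hvN hwv.ne).1 hwv.subset) ⟨w, hwN, hwv⟩
    · obtain ⟨hwV', hwnN, u, hu, huw⟩ := Finset.mem_filter.1 hwF
      have huv : u ⊂ v := huw.trans hwv
      exact hmemWf v hvQ.1 (fun hvN => (hanti u hu v hvN huv.ne).1 huv.subset) ⟨u, hu, huv⟩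
  have hQW : ∀ x ∈ Q, x ∉ W := fun x hx => (Finset.mem_sdiff.1 hx).2
  have hQV : Q ⊆ V := Finset.sdiff_subset
  have hbrEmpty : ∀ X : Finset (Finset (Fin m)), IsBranching X (∅ : Finset _) :=
    fun X => ⟨fun p hp => absurd hp (Finset.notMem_empty p),
      fun p hp => absurd hp (Finset.notMem_empty p)⟩
  have hneV : {k | ∃ B, IsBranching V B ∧ uncov V B = k}.Nonempty :=
    ⟨_, ∅, hbrEmpty V, rfl⟩
  have hneW : {k | ∃ B, IsBranching W B ∧ uncov W B = k}.Nonempty :=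
    ⟨_, ∅, hbrEmpty W, rfl⟩
  refine le_antisymm ?_ ?_
  · -- beta V ≤ beta W, via Hall's theorem
    obtain ⟨B', hB'br, hB'eq⟩ : ∃ B, IsBranching W B ∧ uncov W B = beta W :=
      Nat.sInf_mem hneW
    set P := Q ∪ N with hPdef
    have hPV : P ⊆ V := Finset.union_subset hQV hN
    have hQN : ∀ x ∈ Q, x ∉ N := fun x hx hxN => hQW x hx (hNW hxN)
    set t : {x // x ∈ Q} → Finset (Finset (Fin m)) :=
      fun q => P.filter (fun p => q.1 ⊂ p) with htdef
    have hall : ∀ A : Finset {x // x ∈ Q}, A.card ≤ (A.biUnion t).card := by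
      intro A
      set S := A.image Subtype.val with hSdef
      have hScard : S.card = A.card := Finset.card_image_of_injective _ Subtype.val_injective
      have hSQ : S ⊆ Q := by
        intro x hx
        obtain ⟨q, hq, rfl⟩ := Finset.mem_image.1 hx
        exact q.2
      set T := A.biUnion t with hTdef
      have hTmem : ∀ x, x ∈ T ↔ x ∈ P ∧ ∃ q ∈ S, q ⊂ x := by
        intro x
        simp only [hTdef, Finset.mem_biUnion, htdef, Finset.mem_filter, hSdef,
          Finset.mem_image, Finset.mem_attach, true_and]
        constructor
        · rintro ⟨q, hq, hxP, hqx⟩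
          exact ⟨hxP, q.1, ⟨q, hq, rfl⟩, hqx⟩
        · rintro ⟨hxP, q, ⟨qq, hqq, rfl⟩, hqx⟩
          exact ⟨qq, hqq, hxP, hqx⟩
      have hachain : IsAntichainFam ((S \ T) ∪ (N \ T)) := by
        have haux : ∀ a ∈ (S \ T) ∪ (N \ T), ∀ b ∈ (S \ T) ∪ (N \ T), a ≠ b → ¬ a ⊆ b := by
          intro a ha b hb hab hsub
          have hss : a ⊂ b := HasSubset.Subset.ssubset_of_ne hsub hab
          rcases Finset.mem_union.1 ha with haS | haN
          · rw [Finset.mem_sdiff] at haS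
            have hbP : b ∈ P ∧ b ∉ T := by
              rcases Finset.mem_union.1 hb with hbS | hbN
              · rw [Finset.mem_sdiff] at hbS
                exact ⟨Finset.mem_union_left _ (hSQ hbS.1), hbS.2⟩
              · rw [Finset.mem_sdiff] at hbN
                exact ⟨Finset.mem_union_right _ hbN.1, hbN.2⟩
            exact hbP.2 ((hTmem b).2 ⟨hbP.1, a, haS.1, hss⟩)
          · rw [Finset.mem_sdiff] at haN
            rcases Finset.mem_union.1 hb with hbS | hbN
            · rw [Finset.mem_sdiff] at hbS
              have hbQ := hSQ hbS.1
              exact hQW b hbQ (hmemWf b (hQV hbQ) (hQN b hbQ) ⟨a, haN.1, hss⟩)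
            · rw [Finset.mem_sdiff] at hbN
              exact (hanti a haN.1 b hbN.1 hab).1 hsub
        intro a ha b hb hab
        exact ⟨haux a ha b hb hab, haux b hb a ha hab.symm⟩
      have hsubV : (S \ T) ∪ (N \ T) ⊆ suppFamily M :=
        Finset.union_subset (Finset.sdiff_subset.trans (hSQ.trans hQV))
          (Finset.sdiff_subset.trans hN)
      have hcard := hmax _ hsubV hachain
      have hdisjSN : Disjoint S N := by
        rw [Finset.disjoint_left]
        intro x hx hxN
        exact hQN x (hSQ hx) hxN
      have h1 : (S \ T).card + (S ∩ T).card = S.card := Finset.card_sdiff_add_card_inter S T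
      have h2 : (N \ T).card + (N ∩ T).card = N.card := Finset.card_sdiff_add_card_inter N T
      have h3 : ((S \ T) ∪ (N \ T)).card = (S \ T).card + (N \ T).card :=
        Finset.card_union_of_disjoint (hdisjSN.mono Finset.sdiff_subset Finset.sdiff_subset)
      have h4 : (S ∩ T).card + (N ∩ T).card ≤ T.card := by
        have hsubT : (S ∩ T) ∪ (N ∩ T) ⊆ T :=
          Finset.union_subset Finset.inter_subset_right Finset.inter_subset_right
        calc (S ∩ T).card + (N ∩ T).card = ((S ∩ T) ∪ (N ∩ T)).card :=
              (Finset.card_union_of_disjoint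
                (hdisjSN.mono Finset.inter_subset_left Finset.inter_subset_left)).symm
          _ ≤ T.card := Finset.card_le_card hsubT
      omega
    obtain ⟨f, hfinj, hft⟩ := (Finset.all_card_le_biUnion_card_iff_exists_injective t).1 hall
    have hfP : ∀ q : {x // x ∈ Q}, f q ∈ P ∧ q.1 ⊂ f q := by
      intro q
      have h := hft q
      rw [htdef] at h
      exact Finset.mem_filter.1 h
    set E := Q.attach.image (fun q => (q.1, f q)) with hEdef
    have hmemE : ∀ p, p ∈ E ↔ ∃ q : {x // x ∈ Q}, (q.1, f q) = p := by
      intro p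
      simp [hEdef]
    set B := B' ∪ E with hBdef
    have hEsub : E ⊆ B := Finset.subset_union_right
    have hBbr : IsBranching V B := by
      constructor
      · intro p hp
        rcases Finset.mem_union.1 hp with hp | hp
        · obtain ⟨h1, h2, h3⟩ := hB'br.1 p hp
          exact ⟨hWV h1, hWV h2, h3⟩
        · obtain ⟨q, rfl⟩ := (hmemE p).1 hp
          exact ⟨hQV q.2, hPV (hfP q).1, (hfP q).2⟩
      · intro p hp q hq hpq
        rcases Finset.mem_union.1 hp with hp1 | hp1 <;> rcases Finset.mem_union.1 hq with hq1 | hq1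
        · exact hB'br.2 p hp1 q hq1 hpq
        · obtain ⟨b, rfl⟩ := (hmemE q).1 hq1
          exact absurd ((hB'br.1 p hp1).1) (by rw [hpq]; exact hQW _ b.2)
        · obtain ⟨a, rfl⟩ := (hmemE p).1 hp1
          exact absurd ((hB'br.1 q hq1).1) (by rw [← hpq]; exact hQW _ a.2)
        · obtain ⟨a, rfl⟩ := (hmemE p).1 hp1
          obtain ⟨b, rfl⟩ := (hmemE q).1 hq1
          have hab : a = b := Subtype.ext hpq
          rw [hab]
    have hfilterP : ∀ x ∈ P, B.filter (fun p => p.2 = x) = E.filter (fun p => p.2 = x) := by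
      intro x hx
      ext p
      simp only [Finset.mem_filter, hBdef, Finset.mem_union]
      constructor
      · rintro ⟨hp | hp, he⟩
        · exfalso
          have hxW : x ∈ W := by rw [← he]; exact (hB'br.1 p hp).2.1
          rcases Finset.mem_union.1 hx with hxQ | hxN
          · exact hQW x hxQ hxW
          · exact hF5 p.1 (hB'br.1 p hp).1 x hxN (by rw [← he]; exact (hB'br.1 p hp).2.2)
        · exact ⟨hp, he⟩
      · rintro ⟨hp, he⟩
        exact ⟨Or.inr hp, he⟩
    have hfilterW : ∀ v ∈ W, v ∉ N →
        B.filter (fun p => p.2 = v) = B'.filter (fun p => p.2 = v) := by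
      intro v hv hvN
      ext p
      simp only [Finset.mem_filter, hBdef, Finset.mem_union]
      constructor
      · rintro ⟨hp | hp, he⟩
        · exact ⟨hp, he⟩
        · exfalso
          obtain ⟨b, rfl⟩ := (hmemE p).1 hp
          have hev : f b = v := he
          subst hev
          rcases Finset.mem_union.1 (hfP b).1 with h | h
          · exact hQW _ h hv
          · exact hvN h
      · rintro ⟨hp, he⟩
        exact ⟨Or.inl hp, he⟩
    have hnuW : ∀ v ∈ W, v ∉ N → nuB B v = nuB B' v := by
      intro v hv hvN
      unfold nuB
      rw [hfilterW v hv hvN]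
    have hnuN' : ∀ v ∈ N, nuB B' v = v.card := by
      intro v hv
      have hfe : B'.filter (fun p => p.2 = v) = ∅ := by
        rw [Finset.eq_empty_iff_forall_notMem]
        intro p hp
        obtain ⟨hpB, he⟩ := Finset.mem_filter.1 hp
        exact hF5 p.1 (hB'br.1 p hpB).1 v hv (by rw [← he]; exact (hB'br.1 p hpB).2.2)
      unfold nuB
      rw [hfe, Finset.sup_empty, Finset.bot_eq_empty, Finset.sdiff_empty]
    have hfib : ∀ x : Finset (Fin m), ∀ p₁ ∈ E.filter (fun p => p.2 = x),
        ∀ p₂ ∈ E.filter (fun p => p.2 = x), p₁ = p₂ := by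
      intro x p₁ h₁ p₂ h₂
      obtain ⟨h₁E, h₁e⟩ := Finset.mem_filter.1 h₁
      obtain ⟨h₂E, h₂e⟩ := Finset.mem_filter.1 h₂
      obtain ⟨a, rfl⟩ := (hmemE p₁).1 h₁E
      obtain ⟨b, rfl⟩ := (hmemE p₂).1 h₂E
      have hab : a = b := hfinj (h₁e.trans h₂e.symm)
      rw [hab]
    have hsupcard : ∀ x ∈ P, ((E.filter (fun p => p.2 = x)).sup (fun p => p.1)).card
        = ∑ p ∈ E.filter (fun p => p.2 = x), p.1.card := by
      intro x hx
      rcases Finset.eq_empty_or_nonempty (E.filter (fun p => p.2 = x)) with he | ⟨p, hp⟩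
      · rw [he]; simp
      · have hs : E.filter (fun p => p.2 = x) = {p} :=
          Finset.eq_singleton_iff_unique_mem.2 ⟨hp, fun q hq => hfib x q hq p hp⟩
        rw [hs, Finset.sup_singleton, Finset.sum_singleton]
    have hkey1 : ∀ x ∈ P, nuB B x + ∑ p ∈ E.filter (fun p => p.2 = x), p.1.card = x.card := by
      intro x hx
      rw [← hsupcard x hx]
      unfold nuB
      rw [hfilterP x hx]
      apply Finset.card_sdiff_add_card_eq_card
      rw [← Finset.le_iff_subset]
      apply Finset.sup_le
      intro p hp
      obtain ⟨hpE, he⟩ := Finset.mem_filter.1 hp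
      have := (hBbr.1 p (hEsub hpE)).2.2
      rw [he] at this
      exact this.subset
    have hsum1 : ∑ x ∈ P, nuB B x
        + ∑ x ∈ P, ∑ p ∈ E.filter (fun p => p.2 = x), p.1.card = ∑ x ∈ P, x.card := by
      rw [← Finset.sum_add_distrib]
      exact Finset.sum_congr rfl hkey1
    have hsum2 : ∑ x ∈ P, ∑ p ∈ E.filter (fun p => p.2 = x), p.1.card
        = ∑ p ∈ E, p.1.card := by
      apply Finset.sum_fiberwise_of_maps_to
      intro p hp
      obtain ⟨b, rfl⟩ := (hmemE p).1 hp
      exact (hfP b).1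
    have hsum3 : ∑ p ∈ E, p.1.card = ∑ x ∈ Q, x.card := by
      rw [hEdef, Finset.sum_image
        (by rintro a _ b _ hab; exact Subtype.ext (Prod.ext_iff.1 hab).1)]
      exact Finset.sum_attach Q (fun x => x.card)
    have hdisjQN : Disjoint Q N := Finset.disjoint_left.2 hQN
    have hsumP1 : ∑ x ∈ P, nuB B x = ∑ x ∈ Q, nuB B x + ∑ x ∈ N, nuB B x := by
      rw [hPdef]; exact Finset.sum_union hdisjQN
    have hsumP2 : ∑ x ∈ P, Finset.card x = ∑ x ∈ Q, Finset.card x + ∑ x ∈ N, Finset.card x := by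
      rw [hPdef]; exact Finset.sum_union hdisjQN
    have hsplitV : ∑ v ∈ Q, nuB B v + ∑ v ∈ W, nuB B v = ∑ v ∈ V, nuB B v := by
      rw [hQdef]; exact Finset.sum_sdiff hWV
    have hsplitW : ∑ v ∈ W \ N, nuB B v + ∑ v ∈ N, nuB B v = ∑ v ∈ W, nuB B v :=
      Finset.sum_sdiff hNW
    have hsplitW' : ∑ v ∈ W \ N, nuB B' v + ∑ v ∈ N, nuB B' v = ∑ v ∈ W, nuB B' v :=
      Finset.sum_sdiff hNW
    have hWN : ∑ v ∈ W \ N, nuB B v = ∑ v ∈ W \ N, nuB B' v := by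
      apply Finset.sum_congr rfl
      intro v hv
      rw [Finset.mem_sdiff] at hv
      exact hnuW v hv.1 hv.2
    have hNB' : ∑ v ∈ N, nuB B' v = ∑ v ∈ N, Finset.card v := Finset.sum_congr rfl hnuN'
    have hfinal : uncov V B = uncov W B' := by
      unfold uncov
      omega
    calc beta V ≤ uncov V B := Nat.sInf_le ⟨B, hBbr, rfl⟩
      _ = uncov W B' := hfinal
      _ = beta W := hB'eq
  · -- beta W ≤ beta V
    obtain ⟨B, hBbr, hBeq⟩ : ∃ B, IsBranching V B ∧ uncov V B = beta V :=
      Nat.sInf_mem hneV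
    have hB : ∀ p ∈ B, p.1 ⊂ p.2 := fun p hp => (hBbr.1 p hp).2.2
    set B' := B.filter (fun p => p.1 ∈ W ∧ p.2 ∈ W) with hB'def
    have hB'br : IsBranching W B' := by
      constructor
      · intro p hp
        obtain ⟨hpB, h1, h2⟩ := Finset.mem_filter.1 hp
        exact ⟨h1, h2, (hBbr.1 p hpB).2.2⟩
      · intro p hp q hq hpq
        exact hBbr.2 p (Finset.mem_filter.1 hp).1 q (Finset.mem_filter.1 hq).1 hpq
    have mk : ∀ a : Finset (Fin m) × Fin m, a.1 ∈ W → a.2 ∉ covB B' a.1 →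
        ¬ ∃ p', p' ∈ B ∧ p'.2 = a.1 ∧ a.2 ∈ p'.1 ∧ p'.1 ∈ W := by
      rintro a haW hnc ⟨p', hp', he, hr, hw⟩
      exact hnc (mem_covB.2 ⟨p', Finset.mem_filter.2 ⟨hp', hw, by rw [he]; exact haW⟩, he, hr⟩)
    have key : uncov W B' ≤ uncov V B := by
      rw [← card_US, ← card_US]
      apply Finset.card_le_card_of_injOn (fun p => (descE B hB p.2 p.1, p.2))
      · intro p hp
        rw [Finset.mem_coe, mem_US] at hp ⊢
        obtain ⟨hpW, hp2⟩ := hp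
        rw [Finset.mem_sdiff] at hp2
        refine ⟨descL_closed hB V (fun q hq _ => (hBbr.1 q hq).1) p.1 (hWV hpW) _
          (descE_mem_descL hB p.1), ?_⟩
        rw [Finset.mem_sdiff]
        refine ⟨r_mem_descE hB p.1 hp2.1, fun hc => ?_⟩
        rw [mem_covB] at hc
        exact descE_uncovered hB p.1 hc
      · intro p hp q hq heq2
        simp only [Finset.mem_coe, mem_US, Finset.mem_sdiff] at hp hq
        simp only at heq2
        have e2 : p.2 = q.2 := (Prod.ext_iff.1 heq2).2
        have e1 : descE B hB p.2 p.1 = descE B hB q.2 q.1 := (Prod.ext_iff.1 heq2).1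
        rw [← e2] at e1
        have hu1 := mk p hp.1 hp.2.2
        have hu2 := mk q hq.1 hq.2.2
        rw [← e2] at hu2
        refine Prod.ext_iff.2 ⟨?_, e2⟩
        exact descE_inj hB hBbr.2 W Q hQW
          (fun p' hp' hq' => hQdown _ _ (hBbr.1 p' hp').1 (hBbr.1 p' hp').2.2 hq')
          (fun p' hp' => if h : p'.1 ∈ W then Or.inl h
            else Or.inr (by rw [hQdef]; exact Finset.mem_sdiff.2 ⟨(hBbr.1 p' hp').1, h⟩))
          hp.1 hq.1 hu1 hu2 e1
    calc beta W ≤ uncov W B' := Nat.sInf_le ⟨B', hB'br, rfl⟩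
      _ ≤ uncov V B := key
      _ = beta V := hBeq
end

section
/- Let D be a finite transitive DAG in which the set of minimal elements is the unique maximum antichain. Then every non-minimal vertex has at least two in-neighbors. -/
open Classical in
/-- In a finite transitive DAG (strict poset) whose set of minimal elements is
the unique maximum antichain, every non-minimal vertex has at least two
in-neighbors. -/
theorem stmt12 {V : Type*} [Fintype V] (r : V → V → Prop)
    (htrans : Transitive r) (hirr : Irreflexive r)
    (hmax : ∀ S : Finset V, (∀ u ∈ S, ∀ v ∈ S, ¬ r u v) →
        S.card ≤ (Finset.univ.filter fun v : V => ∀ u, ¬ r u v).card)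
    (huniq : ∀ S : Finset V, (∀ u ∈ S, ∀ v ∈ S, ¬ r u v) →
        S.card = (Finset.univ.filter fun v : V => ∀ u, ¬ r u v).card →
        S = Finset.univ.filter fun v : V => ∀ u, ¬ r u v) :
    ∀ v : V, (∃ u, r u v) → ∃ u₁ u₂, u₁ ≠ u₂ ∧ r u₁ v ∧ r u₂ v := by
  classical
  intro v hv
  obtain ⟨u, huv⟩ := hv
  by_contra h
  push_neg at h
  have key : ∀ w, r w v → w = u := by
    intro w hw
    by_contra hne
    exact h w u hne hw huv
  by_cases hu : ∀ w, ¬ r w u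
  · -- u is minimal
    set M := Finset.univ.filter fun x : V => ∀ w, ¬ r w x with hM
    have huM : u ∈ M := by simp [hM, hu]
    have hvM : v ∉ M := by
      simp only [hM, Finset.mem_filter, Finset.mem_univ, true_and, not_forall, not_not]
      exact ⟨u, huv⟩
    have hvu : v ≠ u := fun e => hvM (e ▸ huM)
    set S := insert v (M.erase u) with hS
    have hanti : ∀ a ∈ S, ∀ b ∈ S, ¬ r a b := by
      intro a ha b hb hab
      rcases Finset.mem_insert.mp ha with ha' | ha' <;>
        rcases Finset.mem_insert.mp hb with hb' | hb'
      · rw [ha', hb'] at hab; exact hirr v hab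
      · have hbmin : ∀ w, ¬ r w b := by
          have := (Finset.mem_erase.mp hb').2
          simpa [hM] using this
        exact hbmin a hab
      · have : a = u := key a (hb' ▸ hab)
        exact (Finset.mem_erase.mp ha').1 this
      · have hbmin : ∀ w, ¬ r w b := by
          have := (Finset.mem_erase.mp hb').2
          simpa [hM] using this
        exact hbmin a hab
    have hcard : S.card = M.card := by
      have hvnot : v ∉ M.erase u := fun hmem => hvM (Finset.mem_erase.mp hmem).2
      rw [hS, Finset.card_insert_of_notMem hvnot,
        Finset.card_erase_of_mem huM]
      have : 1 ≤ M.card := Finset.card_pos.mpr ⟨u, huM⟩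
      omega
    have hSM : S = M := huniq S hanti hcard
    have : v ∈ M := hSM ▸ Finset.mem_insert_self v _
    exact hvM this
  · push_neg at hu
    obtain ⟨w, hw⟩ := hu
    have hwv : r w v := htrans hw huv
    have : w = u := key w hwv
    exact hirr u (this ▸ hw)
end

section
/- Let D_M be a containment digraph such that the set of minimal elements is the only maximum antichain of D_M. Then there exists a maximal optimal branching B of D_M whose set of leaves (vertices of in-degree zero in B) is exactly the set of minimal elements of D_M. -/
open Classical Finset

section AuxStmt13

variable {ρ : Type*} [DecidableEq ρ]

private lemma nuB_anti13 {B B' : Finset (Finset ρ × Finset ρ)} (h : B ⊆ B') (v : Finset ρ) :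
    nuB B' v ≤ nuB B v := by
  apply Finset.card_le_card
  exact Finset.sdiff_subset_sdiff (Finset.Subset.refl v)
    (Finset.sup_mono (Finset.filter_subset_filter _ h))

private lemma uncov_anti13 (V : Finset (Finset ρ)) {B B' : Finset (Finset ρ × Finset ρ)}
    (h : B ⊆ B') : uncov V B' ≤ uncov V B :=
  Finset.sum_le_sum fun v _ => nuB_anti13 h v

private lemma extend_max13 (V : Finset (Finset ρ)) :
    ∀ k (B : Finset (Finset ρ × Finset ρ)), IsBranching V B →
      (V.filter fun v => (∃ w ∈ V, v ⊂ w) ∧ ∀ p ∈ B, p.1 ≠ v).card ≤ k →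
      ∃ B', IsBranching V B' ∧
        (∀ v ∈ V, (∃ w ∈ V, v ⊂ w) → ∃ p ∈ B', p.1 = v) ∧
        uncov V B' ≤ uncov V B := by
  intro k
  induction k with
  | zero =>
    intro B hB hcard
    refine ⟨B, hB, ?_, le_refl _⟩
    intro v hv hex
    by_contra hno
    push_neg at hno
    have hmem : v ∈ V.filter fun v => (∃ w ∈ V, v ⊂ w) ∧ ∀ p ∈ B, p.1 ≠ v :=
      Finset.mem_filter.2 ⟨hv, hex, hno⟩
    have := Finset.card_pos.2 ⟨v, hmem⟩
    omega
  | succ k ih =>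
    intro B hB hcard
    by_cases hall : ∀ v ∈ V, (∃ w ∈ V, v ⊂ w) → ∃ p ∈ B, p.1 = v
    · exact ⟨B, hB, hall, le_refl _⟩
    · push_neg at hall
      obtain ⟨v, hv, hex, hno⟩ := hall
      obtain ⟨w, hw, hvw⟩ := hex
      have hbr1 : IsBranching V (insert (v, w) B) := by
        constructor
        · intro p hp
          rcases Finset.mem_insert.1 hp with rfl | hp
          · exact ⟨hv, hw, hvw⟩
          · exact hB.1 p hp
        · intro p hp q hq hpq
          rcases Finset.mem_insert.1 hp with rfl | hp <;>
            rcases Finset.mem_insert.1 hq with rfl | hq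
          · rfl
          · exact absurd hpq.symm (hno q hq)
          · exact absurd hpq (hno p hp)
          · exact hB.2 p hp q hq hpq
      have hvmem : v ∈ V.filter fun x => (∃ w ∈ V, x ⊂ w) ∧ ∀ p ∈ B, p.1 ≠ x :=
        Finset.mem_filter.2 ⟨hv, ⟨w, hw, hvw⟩, hno⟩
      have hsub : (V.filter fun x => (∃ w ∈ V, x ⊂ w) ∧ ∀ p ∈ insert (v, w) B, p.1 ≠ x)
          ⊆ (V.filter fun x => (∃ w ∈ V, x ⊂ w) ∧ ∀ p ∈ B, p.1 ≠ x).erase v := by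
        intro x hx
        obtain ⟨hxV, hxe, hxno⟩ := Finset.mem_filter.1 hx
        refine Finset.mem_erase.2 ⟨?_, Finset.mem_filter.2 ⟨hxV, hxe,
          fun p hp => hxno p (Finset.mem_insert_of_mem hp)⟩⟩
        intro hxv
        exact hxno (v, w) (Finset.mem_insert_self _ _) hxv.symm
      have hcard1 : (V.filter fun x => (∃ w ∈ V, x ⊂ w) ∧
          ∀ p ∈ insert (v, w) B, p.1 ≠ x).card ≤ k := by
        have h1 := Finset.card_le_card hsub
        rw [Finset.card_erase_of_mem hvmem] at h1
        have h2 := Finset.card_pos.2 ⟨v, hvmem⟩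
        omega
      obtain ⟨B', hB', hmax', hun'⟩ := ih (insert (v, w) B) hbr1 hcard1
      exact ⟨B', hB', hmax', le_trans hun' (uncov_anti13 V (Finset.subset_insert _ _))⟩


private lemma extend_max13' (V : Finset (Finset ρ)) (B : Finset (Finset ρ × Finset ρ))
    (hB : IsBranching V B) :
    ∃ B', IsBranching V B' ∧
      (∀ v ∈ V, (∃ w ∈ V, v ⊂ w) → ∃ p ∈ B', p.1 = v) ∧
      uncov V B' ≤ uncov V B :=
  extend_max13 V _ B hB (le_refl _)

private lemma uncov_reroute13 (V : Finset (Finset ρ)) (B : Finset (Finset ρ × Finset ρ))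
    (hB : IsBranching V B) {u v w : Finset ρ} (huv : u ⊂ v) (hv : v ∈ V)
    (huw : (u, w) ∈ B) (hleaf : ∀ p ∈ B, p.2 ≠ v) :
    uncov V (insert (u, v) (B.erase (u, w))) ≤ uncov V B := by
  set B1 := insert (u, v) (B.erase (u, w)) with hB1def
  have hw : w ∈ V := (hB.1 _ huw).2.1
  have hwv : w ≠ v := hleaf _ huw
  -- other heads unchanged
  have h_other : ∀ x : Finset ρ, x ≠ v → x ≠ w → nuB B1 x = nuB B x := by
    intro x hxv hxw
    have hfil : B1.filter (fun p => p.2 = x) = B.filter (fun p => p.2 = x) := by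
      ext p
      simp only [hB1def, Finset.mem_filter, Finset.mem_insert, Finset.mem_erase]
      constructor
      · rintro ⟨hp | ⟨hne, hpB⟩, hpx⟩
        · exact absurd hpx (by rw [hp]; exact fun h => hxv h.symm)
        · exact ⟨hpB, hpx⟩
      · rintro ⟨hpB, hpx⟩
        refine ⟨Or.inr ⟨?_, hpB⟩, hpx⟩
        rintro rfl
        exact hxw hpx.symm
    unfold nuB
    rw [hfil]
  -- at v
  have hfv : B.filter (fun p => p.2 = v) = ∅ :=
    Finset.filter_eq_empty_iff.2 hleaf
  have hfv1 : B1.filter (fun p => p.2 = v) = {(u, v)} := by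
    ext p
    simp only [hB1def, Finset.mem_filter, Finset.mem_insert, Finset.mem_erase,
      Finset.mem_singleton]
    constructor
    · rintro ⟨hp | ⟨hne, hpB⟩, hpx⟩
      · exact hp
      · exact absurd hpx (hleaf p hpB)
    · rintro rfl
      exact ⟨Or.inl rfl, rfl⟩
  have h_v : nuB B1 v + u.card = nuB B v := by
    unfold nuB
    rw [hfv, hfv1, Finset.sup_singleton, Finset.sup_empty]
    show (v \ u).card + u.card = (v \ ⊥).card
    rw [Finset.bot_eq_empty, Finset.sdiff_empty]
    exact Finset.card_sdiff_add_card_eq_card huv.subset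
  -- at w
  have h_w : nuB B1 w ≤ nuB B w + u.card := by
    have hfw1 : B1.filter (fun p => p.2 = w) = (B.erase (u, w)).filter (fun p => p.2 = w) := by
      ext p
      simp only [hB1def, Finset.mem_filter, Finset.mem_insert, Finset.mem_erase]
      constructor
      · rintro ⟨hp | ⟨hne, hpB⟩, hpx⟩
        · exact absurd hpx (by rw [hp]; exact fun h => hwv h.symm)
        · exact ⟨⟨hne, hpB⟩, hpx⟩
      · rintro ⟨⟨hne, hpB⟩, hpx⟩
        exact ⟨Or.inr ⟨hne, hpB⟩, hpx⟩
    have hfw : B.filter (fun p => p.2 = w)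
        = insert (u, w) ((B.erase (u, w)).filter (fun p => p.2 = w)) := by
      ext p
      simp only [Finset.mem_filter, Finset.mem_insert, Finset.mem_erase]
      constructor
      · rintro ⟨hpB, hpx⟩
        by_cases hpe : p = (u, w)
        · exact Or.inl hpe
        · exact Or.inr ⟨⟨hpe, hpB⟩, hpx⟩
      · rintro (rfl | ⟨⟨hne, hpB⟩, hpx⟩)
        · exact ⟨huw, rfl⟩
        · exact ⟨hpB, hpx⟩
    unfold nuB
    rw [hfw1, hfw, Finset.sup_insert]
    set A := ((B.erase (u, w)).filter (fun p => p.2 = w)).sup (fun p => p.1) with hA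
    have hsubs : w \ A ⊆ (w \ ((u, w).1 ⊔ A)) ∪ u := by
      intro x hx
      obtain ⟨hxw, hxA⟩ := Finset.mem_sdiff.1 hx
      by_cases hxu : x ∈ u
      · exact Finset.mem_union_right _ hxu
      · refine Finset.mem_union_left _ (Finset.mem_sdiff.2 ⟨hxw, ?_⟩)
        intro hmem
        rcases Finset.mem_union.1 (by simpa [Finset.sup_eq_union] using hmem) with h | h
        · exact hxu h
        · exact hxA h
    calc (w \ A).card ≤ ((w \ ((u, w).1 ⊔ A)) ∪ u).card := Finset.card_le_card hsubs
      _ ≤ (w \ ((u, w).1 ⊔ A)).card + u.card := Finset.card_union_le _ _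
  -- assemble
  have hvw' : w ∈ V.erase v := Finset.mem_erase.2 ⟨hwv, hw⟩
  have h1 : uncov V B1 = nuB B1 v + ∑ x ∈ V.erase v, nuB B1 x :=
    (Finset.add_sum_erase V (nuB B1) hv).symm
  have h2 : uncov V B = nuB B v + ∑ x ∈ V.erase v, nuB B x :=
    (Finset.add_sum_erase V (nuB B) hv).symm
  have h3 : ∑ x ∈ V.erase v, nuB B1 x
      ≤ (∑ x ∈ V.erase v, nuB B x) + u.card := by
    have hpt : ∀ x ∈ V.erase v, nuB B1 x ≤ nuB B x + (if x = w then u.card else 0) := by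
      intro x hx
      by_cases hxw : x = w
      · subst hxw; simpa using h_w
      · rw [h_other x (Finset.mem_erase.1 hx).1 hxw, if_neg hxw, Nat.add_zero]
    calc ∑ x ∈ V.erase v, nuB B1 x
        ≤ ∑ x ∈ V.erase v, (nuB B x + (if x = w then u.card else 0)) :=
          Finset.sum_le_sum hpt
      _ = (∑ x ∈ V.erase v, nuB B x) + ∑ x ∈ V.erase v, (if x = w then u.card else 0) :=
          Finset.sum_add_distrib
      _ = (∑ x ∈ V.erase v, nuB B x) + u.card := by
          rw [Finset.sum_ite_eq' (V.erase v) w (fun _ => u.card), if_pos hvw']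
  omega

private lemma exists_matching13 (V : Finset (Finset ρ)) (Mins : Finset (Finset ρ))
    (hMins : ∀ v, v ∈ Mins ↔ v ∈ V ∧ ∀ u ∈ V, ¬ u ⊂ v)
    (huniq : ∀ S ⊆ V, IsAntichainFam S → S ≠ Mins → S.card < Mins.card) :
    ∃ g : Finset ρ → Finset ρ,
      (∀ v ∈ V, (∃ u ∈ V, u ⊂ v) → g v ∈ V ∧ g v ⊂ v) ∧
      (∀ v ∈ V, ∀ v' ∈ V, (∃ u ∈ V, u ⊂ v) → (∃ u ∈ V, u ⊂ v') →
        g v = g v' → v = v') := by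
  classical
  set NM : Finset (Finset ρ) := V.filter (fun v => ∃ u ∈ V, u ⊂ v) with hNM
  set t : {x // x ∈ NM} → Finset (Finset ρ) := fun x => V.filter (fun u => u ⊂ x.1) with ht
  have hcond : ∀ s : Finset {x // x ∈ NM}, s.card ≤ (s.biUnion t).card := by
    intro s
    by_contra hlt
    push_neg at hlt
    set N : Finset (Finset ρ) := s.biUnion t with hN
    set S : Finset (Finset ρ) := s.image (fun x => x.1) with hS
    have hScard : S.card = s.card := Finset.card_image_of_injective s Subtype.val_injective
    have hNV : N ⊆ V := by
      intro a ha
      obtain ⟨x, hx, hax⟩ := Finset.mem_biUnion.1 ha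
      exact (Finset.mem_filter.1 hax).1
    have hSV : S ⊆ V := by
      intro a ha
      obtain ⟨x, hx, rfl⟩ := Finset.mem_image.1 ha
      exact (Finset.mem_filter.1 x.2).1
    have hSnm : ∀ a ∈ S, ∃ u ∈ V, u ⊂ a := by
      intro a ha
      obtain ⟨x, hx, rfl⟩ := Finset.mem_image.1 ha
      exact (Finset.mem_filter.1 x.2).2
    have hSN : ∀ a ∈ V, ∀ b ∈ S, a ⊂ b → a ∈ N := by
      intro a ha b hb hab
      obtain ⟨x, hx, rfl⟩ := Finset.mem_image.1 hb
      exact Finset.mem_biUnion.2 ⟨x, hx, Finset.mem_filter.2 ⟨ha, hab⟩⟩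
    have hdown : ∀ a ∈ V, ∀ b ∈ N, a ⊂ b → a ∈ N := by
      intro a ha b hb hab
      obtain ⟨x, hx, hbx⟩ := Finset.mem_biUnion.1 hb
      exact Finset.mem_biUnion.2 ⟨x, hx,
        Finset.mem_filter.2 ⟨ha, hab.trans (Finset.mem_filter.1 hbx).2⟩⟩
    have hSne : S.Nonempty := by
      rw [← Finset.card_pos, hScard]; omega
    set T : Finset (Finset ρ) := S ∪ N with hT
    have hTV : T ⊆ V := Finset.union_subset hSV hNV
    set MaxT : Finset (Finset ρ) := T.filter (fun a => ∀ b ∈ T, ¬ a ⊂ b) with hMaxT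
    have hTMax : T \ MaxT ⊆ N := by
      intro a ha
      obtain ⟨haT, haM⟩ := Finset.mem_sdiff.1 ha
      have : ∃ b ∈ T, a ⊂ b := by
        by_contra hcon
        push_neg at hcon
        exact haM (Finset.mem_filter.2 ⟨haT, hcon⟩)
      obtain ⟨b, hbT, hab⟩ := this
      rcases Finset.mem_union.1 hbT with hbS | hbN
      · exact hSN a (hTV haT) b hbS hab
      · exact hdown a (hTV haT) b hbN hab
    have hMaxTne : MaxT.Nonempty := by
      obtain ⟨m, hm⟩ := Finset.exists_maximal
        (hSne.mono (Finset.subset_union_left))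
      exact ⟨m, Finset.mem_filter.2 ⟨hm.1, fun b hb hsb => hsb.2 (hm.2 hb hsb.1)⟩⟩
    have hMaxNotMin : ∀ a ∈ MaxT, a ∉ Mins := by
      intro a ha hamin
      obtain ⟨haT, hamax⟩ := Finset.mem_filter.1 ha
      have hminprop := ((hMins a).1 hamin).2
      rcases Finset.mem_union.1 haT with haS | haN
      · obtain ⟨u, hu, hua⟩ := hSnm a haS
        exact hminprop u hu hua
      · obtain ⟨x, hx, hax⟩ := Finset.mem_biUnion.1 haN
        refine hamax x.1 ?_ (Finset.mem_filter.1 hax).2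
        exact Finset.mem_union_left _ (Finset.mem_image.2 ⟨x, hx, rfl⟩)
    set A : Finset (Finset ρ) := (Mins \ N) ∪ MaxT with hA
    have hAV : A ⊆ V := Finset.union_subset
      ((Finset.sdiff_subset).trans (fun a ha => ((hMins a).1 ha).1))
      ((Finset.filter_subset _ _).trans hTV)
    have hA1 : ∀ a ∈ A, ∀ b ∈ A, a ≠ b → ¬ a ⊆ b := by
      intro a ha b hb hne hab
      have hab' : a ⊂ b := Finset.ssubset_iff_subset_ne.2 ⟨hab, hne⟩
      rcases Finset.mem_union.1 hb with hbM | hbX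
      · have hbmin := ((hMins b).1 (Finset.mem_sdiff.1 hbM).1).2
        exact hbmin a (hAV ha) hab'
      · rcases Finset.mem_union.1 ha with haM | haX
        · obtain ⟨haMin, haN⟩ := Finset.mem_sdiff.1 haM
          have hbT := (Finset.mem_filter.1 hbX).1
          rcases Finset.mem_union.1 hbT with hbS | hbN
          · exact haN (hSN a (hAV ha) b hbS hab')
          · exact haN (hdown a (hAV ha) b hbN hab')
        · exact (Finset.mem_filter.1 haX).2 b (Finset.mem_filter.1 hbX).1 hab'
    have hanti : IsAntichainFam A := fun x hx y hy hne =>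
      ⟨hA1 x hx y hy hne, hA1 y hy x hx hne.symm⟩
    have hAne : A ≠ Mins := by
      obtain ⟨y, hy⟩ := hMaxTne
      intro hEq
      exact hMaxNotMin y hy (hEq ▸ Finset.mem_union_right _ hy)
    have hAcard := huniq A hAV hanti hAne
    have hdisj : Disjoint (Mins \ N) MaxT := by
      rw [Finset.disjoint_left]
      intro a haM haX
      exact hMaxNotMin a haX (Finset.mem_sdiff.1 haM).1
    have hAeq : A.card = (Mins \ N).card + MaxT.card := Finset.card_union_of_disjoint hdisj
    have hMsplit : (Mins \ N).card + (Mins ∩ N).card = Mins.card :=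
      Finset.card_sdiff_add_card_inter _ _
    have hT1 : (T \ MaxT).card + MaxT.card = T.card :=
      Finset.card_sdiff_add_card_eq_card (Finset.filter_subset _ _)
    have hT2 : (T \ MaxT).card ≤ N.card := Finset.card_le_card hTMax
    have hT3 : T.card + (S ∩ N).card = S.card + N.card :=
      Finset.card_union_add_card_inter S N
    have hdisj2 : Disjoint (Mins ∩ N) (S ∩ N) := by
      rw [Finset.disjoint_left]
      intro a haM haS
      obtain ⟨u, hu, hua⟩ := hSnm a (Finset.mem_inter.1 haS).1
      exact ((hMins a).1 (Finset.mem_inter.1 haM).1).2 u hu hua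
    have hNbig : (Mins ∩ N).card + (S ∩ N).card ≤ N.card := by
      rw [← Finset.card_union_of_disjoint hdisj2]
      exact Finset.card_le_card (Finset.union_subset
        (Finset.inter_subset_right) (Finset.inter_subset_right))
    omega
  obtain ⟨f, hfinj, hft⟩ := (Finset.all_card_le_biUnion_card_iff_exists_injective t).1 hcond
  refine ⟨fun v => if h : v ∈ NM then f ⟨v, h⟩ else v, ?_, ?_⟩
  · intro v hv hex
    have hvNM : v ∈ NM := Finset.mem_filter.2 ⟨hv, hex⟩
    simp only [dif_pos hvNM]
    have := hft ⟨v, hvNM⟩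
    exact ⟨(Finset.mem_filter.1 this).1, (Finset.mem_filter.1 this).2⟩
  · intro v hv v' hv' hex hex' hgg
    have hvNM : v ∈ NM := Finset.mem_filter.2 ⟨hv, hex⟩
    have hvNM' : v' ∈ NM := Finset.mem_filter.2 ⟨hv', hex'⟩
    simp only [dif_pos hvNM, dif_pos hvNM'] at hgg
    have := hfinj hgg
    exact congrArg Subtype.val this


private lemma fix_leaves13 (V : Finset (Finset ρ)) (g : Finset ρ → Finset ρ)
    (hg1 : ∀ v ∈ V, (∃ u ∈ V, u ⊂ v) → g v ∈ V ∧ g v ⊂ v)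
    (hg2 : ∀ v ∈ V, ∀ v' ∈ V, (∃ u ∈ V, u ⊂ v) → (∃ u ∈ V, u ⊂ v') →
        g v = g v' → v = v') :
    ∀ k (B : Finset (Finset ρ × Finset ρ)), IsBranching V B →
      (∀ v ∈ V, (∃ w ∈ V, v ⊂ w) → ∃ p ∈ B, p.1 = v) →
      ((V.filter fun v => ∃ u ∈ V, u ⊂ v).filter fun v => (g v, v) ∉ B).card ≤ k →
      ∃ B', IsBranching V B' ∧
        (∀ v ∈ V, (∃ w ∈ V, v ⊂ w) → ∃ p ∈ B', p.1 = v) ∧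
        uncov V B' ≤ uncov V B ∧
        (∀ v ∈ V, (∃ u ∈ V, u ⊂ v) → ∃ p ∈ B', p.2 = v) := by
  intro k
  induction k with
  | zero =>
    intro B hB hmax hcard
    refine ⟨B, hB, hmax, le_refl _, ?_⟩
    intro v hv hex
    have hempty : ((V.filter fun v => ∃ u ∈ V, u ⊂ v).filter fun v => (g v, v) ∉ B) = ∅ :=
      Finset.card_eq_zero.1 (Nat.le_zero.1 hcard)
    have hvm : v ∈ V.filter fun v => ∃ u ∈ V, u ⊂ v := Finset.mem_filter.2 ⟨hv, hex⟩
    by_contra hno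
    push_neg at hno
    have hgvB : (g v, v) ∉ B := fun h => hno _ h rfl
    have : v ∈ ((V.filter fun v => ∃ u ∈ V, u ⊂ v).filter fun v => (g v, v) ∉ B) :=
      Finset.mem_filter.2 ⟨hvm, hgvB⟩
    rw [hempty] at this
    exact absurd this (Finset.notMem_empty v)
  | succ k ih =>
    intro B hB hmax hcard
    by_cases hdone : ∀ v ∈ V, (∃ u ∈ V, u ⊂ v) → ∃ p ∈ B, p.2 = v
    · exact ⟨B, hB, hmax, le_refl _, hdone⟩
    push_neg at hdone
    obtain ⟨v, hv, hexu, hleaf⟩ := hdone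
    obtain ⟨huV, huv⟩ := hg1 v hv hexu
    obtain ⟨p, hp, hpu⟩ := hmax (g v) huV ⟨v, hv, huv⟩
    set u : Finset ρ := g v with hu
    set w : Finset ρ := p.2 with hwdef
    have huwB : (u, w) ∈ B := by
      have : p = (u, w) := Prod.ext hpu rfl
      rwa [this] at hp
    have hwv : w ≠ v := hleaf (u, w) huwB
    set B1 : Finset (Finset ρ × Finset ρ) := insert (u, v) (B.erase (u, w)) with hB1def
    have hbr1 : IsBranching V B1 := by
      constructor
      · intro q hq
        rcases Finset.mem_insert.1 hq with rfl | hq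
        · exact ⟨huV, hv, huv⟩
        · exact hB.1 q (Finset.mem_of_mem_erase hq)
      · intro q hq r hr hqr
        rcases Finset.mem_insert.1 hq with rfl | hq <;>
          rcases Finset.mem_insert.1 hr with rfl | hr
        · rfl
        · exfalso
          obtain ⟨hrne, hrB⟩ := Finset.mem_erase.1 hr
          have : r.2 = w := hB.2 r hrB (u, w) huwB (by rw [← hqr])
          exact hrne (Prod.ext (by rw [← hqr]) this)
        · exfalso
          obtain ⟨hqne, hqB⟩ := Finset.mem_erase.1 hq
          have : q.2 = w := hB.2 q hqB (u, w) huwB (by rw [hqr])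
          exact hqne (Prod.ext (by rw [hqr]) this)
        · exact hB.2 q (Finset.mem_of_mem_erase hq) r (Finset.mem_of_mem_erase hr) hqr
    have hmax1 : ∀ x ∈ V, (∃ w' ∈ V, x ⊂ w') → ∃ q ∈ B1, q.1 = x := by
      intro x hx hex
      obtain ⟨q, hq, hqx⟩ := hmax x hx hex
      by_cases hqe : q = (u, w)
      · exact ⟨(u, v), Finset.mem_insert_self _ _, by rw [← hqx, hqe]⟩
      · exact ⟨q, Finset.mem_insert_of_mem (Finset.mem_erase.2 ⟨hqe, hq⟩), hqx⟩
    have hun1 : uncov V B1 ≤ uncov V B :=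
      uncov_reroute13 V B hB huv hv huwB hleaf
    have hvmem : v ∈ (V.filter fun x => ∃ u' ∈ V, u' ⊂ x).filter fun x => (g x, x) ∉ B := by
      refine Finset.mem_filter.2 ⟨Finset.mem_filter.2 ⟨hv, hexu⟩, ?_⟩
      intro h
      exact hleaf (g v, v) h rfl
    have hsub : ((V.filter fun x => ∃ u' ∈ V, u' ⊂ x).filter fun x => (g x, x) ∉ B1)
        ⊆ ((V.filter fun x => ∃ u' ∈ V, u' ⊂ x).filter fun x => (g x, x) ∉ B).erase v := by
      intro x hx
      obtain ⟨hxf, hxB1⟩ := Finset.mem_filter.1 hx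
      obtain ⟨hxV, hxex⟩ := Finset.mem_filter.1 hxf
      have hxv : x ≠ v := by
        rintro rfl
        exact hxB1 (Finset.mem_insert_self _ _)
      refine Finset.mem_erase.2 ⟨hxv, Finset.mem_filter.2 ⟨hxf, ?_⟩⟩
      intro hxB
      have hne : (g x, x) ≠ (u, w) := by
        intro heq
        have h1 : g x = g v := congrArg Prod.fst heq
        exact hxv (hg2 x hxV v hv hxex hexu h1)
      exact hxB1 (Finset.mem_insert_of_mem (Finset.mem_erase.2 ⟨hne, hxB⟩))
    have hcard1 : ((V.filter fun x => ∃ u' ∈ V, u' ⊂ x).filter fun x => (g x, x) ∉ B1).card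
        ≤ k := by
      have h1 := Finset.card_le_card hsub
      rw [Finset.card_erase_of_mem hvmem] at h1
      have h2 := Finset.card_pos.2 ⟨v, hvmem⟩
      omega
    obtain ⟨B', h1, h2, h3, h4⟩ := ih B1 hbr1 hmax1 hcard1
    exact ⟨B', h1, h2, le_trans h3 hun1, h4⟩

private lemma fix_leaves13' (V : Finset (Finset ρ)) (g : Finset ρ → Finset ρ)
    (hg1 : ∀ v ∈ V, (∃ u ∈ V, u ⊂ v) → g v ∈ V ∧ g v ⊂ v)
    (hg2 : ∀ v ∈ V, ∀ v' ∈ V, (∃ u ∈ V, u ⊂ v) → (∃ u ∈ V, u ⊂ v') →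
        g v = g v' → v = v')
    (B : Finset (Finset ρ × Finset ρ)) (hB : IsBranching V B)
    (hmax : ∀ v ∈ V, (∃ w ∈ V, v ⊂ w) → ∃ p ∈ B, p.1 = v) :
    ∃ B', IsBranching V B' ∧
      (∀ v ∈ V, (∃ w ∈ V, v ⊂ w) → ∃ p ∈ B', p.1 = v) ∧
      uncov V B' ≤ uncov V B ∧
      (∀ v ∈ V, (∃ u ∈ V, u ⊂ v) → ∃ p ∈ B', p.2 = v) :=
  fix_leaves13 V g hg1 hg2 _ B hB hmax (le_refl _)

end AuxStmt13

set_option maxHeartbeats 1000000 in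
/-- If the set of minimal elements of the containment digraph `D_M` is its
only maximum antichain, then there exists a maximal optimal branching of
`D_M` whose set of leaves is exactly the set of minimal elements. -/
theorem stmt13 {m n : ℕ} (M : Matrix (Fin m) (Fin n) Bool)
    (huniq : ∀ S ⊆ suppFamily M, IsAntichainFam S →
        S ≠ (suppFamily M).filter (fun v => ∀ u ∈ suppFamily M, ¬ u ⊂ v) →
        S.card <
          ((suppFamily M).filter fun v => ∀ u ∈ suppFamily M, ¬ u ⊂ v).card) :
    ∃ B : Finset (Finset (Fin m) × Finset (Fin m)),
      IsBranching (suppFamily M) B ∧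
      (∀ v ∈ suppFamily M, (∃ w ∈ suppFamily M, v ⊂ w) → ∃ p ∈ B, p.1 = v) ∧
      (∀ B', IsBranching (suppFamily M) B' →
          uncov (suppFamily M) B ≤ uncov (suppFamily M) B') ∧
      (suppFamily M).filter (fun v => ∀ p ∈ B, p.2 ≠ v) =
        (suppFamily M).filter (fun v => ∀ u ∈ suppFamily M, ¬ u ⊂ v) := by
  classical
  set V : Finset (Finset (Fin m)) := suppFamily M with hV
  -- an optimal branching exists
  have hne : {k | ∃ B, IsBranching V B ∧ uncov V B = k}.Nonempty := by
    refine ⟨uncov V ∅, ∅, ⟨?_, ?_⟩, rfl⟩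
    · intro p hp; exact absurd hp (Finset.notMem_empty p)
    · intro p hp; exact absurd hp (Finset.notMem_empty p)
  obtain ⟨B0, hB0, hB0val⟩ := Nat.sInf_mem hne
  have hopt : ∀ B', IsBranching V B' → uncov V B0 ≤ uncov V B' := by
    intro B' hB'
    rw [hB0val]
    exact Nat.sInf_le ⟨B', hB', rfl⟩
  -- extend to a maximal branching
  obtain ⟨B1, hB1, hmax1, hun1⟩ := extend_max13' V B0 hB0
  -- Hall matching
  obtain ⟨g, hg1, hg2⟩ := exists_matching13 V
    (V.filter (fun v => ∀ u ∈ V, ¬ u ⊂ v))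
    (fun v => Finset.mem_filter) huniq
  -- fix the leaves
  obtain ⟨B2, hB2, hmax2, hun2, hleaves⟩ := fix_leaves13' V g hg1 hg2 B1 hB1 hmax1
  refine ⟨B2, hB2, hmax2, ?_, ?_⟩
  · intro B' hB'
    exact le_trans (le_trans hun2 hun1) (hopt B' hB')
  · ext a
    simp only [Finset.mem_filter]
    constructor
    · rintro ⟨haV, hnol⟩
      refine ⟨haV, ?_⟩
      intro x hx hxa
      obtain ⟨p, hp, hpa⟩ := hleaves a haV ⟨x, hx, hxa⟩
      exact hnol p hp hpa
    · rintro ⟨haV, hmin⟩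
      refine ⟨haV, ?_⟩
      intro p hp hpa
      obtain ⟨h1, _, h3⟩ := hB2.1 p hp
      rw [hpa] at h3
      exact hmin p.1 h1 h3
end
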